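/- arXiv:1905.03452 — 2 statements merged into one kernel-verified Lean document; each statement's English description precedes it below -/
import Mathlib

section
/- In the stage game Γ(μ) with unbounded signals (α⁻ = 0 and α⁺ = 1), for every prior μ ∈ (0,1) there exists no deterrence equilibrium: in every subgame perfect equilibrium of Γ(μ), each firm is chosen by the consumer with positive probability. -/
open MeasureTheory Set Filter Topology
open scoped ENNReal NNReal

noncomputable section

/-- The consumer's possible actions: buy product 0, buy product 1, or exit. -/
inductive CAction : Type
  | buy0 : CAction
  | buy1 : CAction
  | exit : CAction

instance : MeasurableSpace CAction := ⊤

/-- A signal structure `(F₀, F₁, S)`: two mutually absolutely continuous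
probability measures on a measurable space `S`. -/
structure SignalStructure (S : Type) [MeasurableSpace S] : Type where
  F0 : Measure S
  F1 : Measure S
  prob0 : IsProbabilityMeasure F0
  prob1 : IsProbabilityMeasure F1
  ac01 : F0 ≪ F1
  ac10 : F1 ≪ F0

namespace SignalStructure

variable {S : Type} [MeasurableSpace S]

/-- The reference measure `(F₀ + F₁)/2`. -/
def ref (𝒮 : SignalStructure S) : Measure S := (2 : ℝ≥0∞)⁻¹ • (𝒮.F0 + 𝒮.F1)

/-- Radon–Nikodym density of `F₀` with respect to `(F₀+F₁)/2`. -/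
def f0 (𝒮 : SignalStructure S) : S → ℝ≥0∞ := 𝒮.F0.rnDeriv 𝒮.ref

/-- Radon–Nikodym density of `F₁` with respect to `(F₀+F₁)/2`. -/
def f1 (𝒮 : SignalStructure S) : S → ℝ≥0∞ := 𝒮.F1.rnDeriv 𝒮.ref

/-- The private belief `p(s) = f₀(s)/(f₀(s)+f₁(s))`. -/
def p (𝒮 : SignalStructure S) (s : S) : ℝ :=
  (𝒮.f0 s).toReal / ((𝒮.f0 s).toReal + (𝒮.f1 s).toReal)

/-- `G₀(x) = F₀ {s | p(s) < x}`, the CDF of the private belief in state 0. -/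
def G0 (𝒮 : SignalStructure S) (x : ℝ) : ℝ := (𝒮.F0 {s | 𝒮.p s < x}).toReal

/-- `G₁(x) = F₁ {s | p(s) < x}`, the CDF of the private belief in state 1. -/
def G1 (𝒮 : SignalStructure S) (x : ℝ) : ℝ := (𝒮.F1 {s | 𝒮.p s < x}).toReal

/-- `α⁻ = inf {x | G(x) > 0}`. -/
def alphaLo (𝒮 : SignalStructure S) : ℝ := sInf {x | 0 < 𝒮.G0 x}

/-- `α⁺ = sup {x | G(x) < 1}`. -/
def alphaHi (𝒮 : SignalStructure S) : ℝ := sSup {x | 𝒮.G0 x < 1}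

/-- Signals are bounded if `α⁻ > 0` and `α⁺ < 1`. -/
def Bounded (𝒮 : SignalStructure S) : Prop := 0 < 𝒮.alphaLo ∧ 𝒮.alphaHi < 1

/-- Signals are unbounded if `α⁻ = 0` and `α⁺ = 1`. -/
def Unbounded (𝒮 : SignalStructure S) : Prop := 𝒮.alphaLo = 0 ∧ 𝒮.alphaHi = 1

/-- Assumption 1: `G₀, G₁` are differentiable on `(α⁻, α⁺)` with continuous
nonnegative derivatives `g₀, g₁ : [α⁻, α⁺] → ℝ₊`. -/
structure Assumption1 (𝒮 : SignalStructure S) (g0 g1 : ℝ → ℝ) : Prop where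
  cont0 : ContinuousOn g0 (Icc 𝒮.alphaLo 𝒮.alphaHi)
  cont1 : ContinuousOn g1 (Icc 𝒮.alphaLo 𝒮.alphaHi)
  nonneg0 : ∀ x ∈ Icc 𝒮.alphaLo 𝒮.alphaHi, 0 ≤ g0 x
  nonneg1 : ∀ x ∈ Icc 𝒮.alphaLo 𝒮.alphaHi, 0 ≤ g1 x
  hasDeriv0 : ∀ x ∈ Ioo 𝒮.alphaLo 𝒮.alphaHi, HasDerivAt 𝒮.G0 (g0 x) x
  hasDeriv1 : ∀ x ∈ Ioo 𝒮.alphaLo 𝒮.alphaHi, HasDerivAt 𝒮.G1 (g1 x) x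

/-- The signal structure exhibits vanishing likelihood: `g₁(α⁻) = g₀(α⁺) = 0`. -/
def VanishingLikelihood (𝒮 : SignalStructure S) (g0 g1 : ℝ → ℝ) : Prop :=
  g1 𝒮.alphaLo = 0 ∧ g0 𝒮.alphaHi = 0

end SignalStructure

/-- Bayesian posterior on state 0 from a prior `μ` and a private belief `q`:
`p_μ = μ q / (μ q + (1-μ)(1-q))`. -/
def posterior (μ q : ℝ) : ℝ := μ * q / (μ * q + (1 - μ) * (1 - q))

/-- The consumer's expected utility, given posterior `q` on state 0 and prices
`τ₀, τ₁`, from each action. -/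
def cUtil (q τ0 τ1 : ℝ) : CAction → ℝ
  | CAction.buy0 => q - τ0
  | CAction.buy1 => (1 - q) - τ1
  | CAction.exit => 0

/-- A consumer pure strategy: maps the posted price pair and the signal to an action. -/
abbrev CStrategy (S : Type) : Type := ℝ → ℝ → S → CAction

/-- A mixed price strategy of a firm: a Borel probability measure on `[0,1]`. -/
def IsPriceStrategy (φ : Measure ℝ) : Prop :=
  IsProbabilityMeasure φ ∧ φ (Icc (0:ℝ) 1) = 1

namespace SignalStructure

variable {S : Type} [MeasurableSpace S]

/-- The signal distribution under prior `μ`: the mixture `μ F₀ + (1-μ) F₁`. -/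
def Fmix (𝒮 : SignalStructure S) (μ : ℝ) : Measure S :=
  ENNReal.ofReal μ • 𝒮.F0 + ENNReal.ofReal (1 - μ) • 𝒮.F1

/-- The probability (under prior `μ`) that the consumer takes action `a` when the
pure prices `τ₀, τ₁` are posted. -/
def actProb (𝒮 : SignalStructure S) (μ : ℝ) (σ : CStrategy S) (τ0 τ1 : ℝ) (a : CAction) : ℝ :=
  (𝒮.Fmix μ {s | σ τ0 τ1 s = a}).toReal

/-- Firm 0's expected payoff in `Γ(μ)` under mixed strategies `φ₀, φ₁` and consumer
strategy `σ`. -/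
def Pi0 (𝒮 : SignalStructure S) (μ : ℝ) (φ0 φ1 : Measure ℝ) (σ : CStrategy S) : ℝ :=
  ∫ τ, 𝒮.actProb μ σ τ.1 τ.2 CAction.buy0 * τ.1 ∂(φ0.prod φ1)

/-- Firm 1's expected payoff in `Γ(μ)`. -/
def Pi1 (𝒮 : SignalStructure S) (μ : ℝ) (φ0 φ1 : Measure ℝ) (σ : CStrategy S) : ℝ :=
  ∫ τ, 𝒮.actProb μ σ τ.1 τ.2 CAction.buy1 * τ.2 ∂(φ0.prod φ1)

/-- The probability that the consumer takes action `a` under mixed price strategies. -/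
def actProbMix (𝒮 : SignalStructure S) (μ : ℝ) (φ0 φ1 : Measure ℝ) (σ : CStrategy S)
    (a : CAction) : ℝ :=
  ∫ τ, 𝒮.actProb μ σ τ.1 τ.2 a ∂(φ0.prod φ1)

/-- A subgame perfect equilibrium of the stage game `Γ(μ)`: the consumer strategy is a
best reply to every price pair, and each firm's mixed price strategy maximizes its
expected payoff given the opponent's strategy and the consumer's strategy. -/
structure IsSPE (𝒮 : SignalStructure S) (μ : ℝ) (φ0 φ1 : Measure ℝ) (σ : CStrategy S) :
    Prop where
  strat0 : IsPriceStrategy φ0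
  strat1 : IsPriceStrategy φ1
  meas : ∀ τ0 τ1, Measurable (σ τ0 τ1)
  consumerBR : ∀ τ0 ∈ Icc (0:ℝ) 1, ∀ τ1 ∈ Icc (0:ℝ) 1,
    ∀ᵐ s ∂(𝒮.Fmix μ), ∀ a : CAction,
      cUtil (posterior μ (𝒮.p s)) τ0 τ1 a ≤ cUtil (posterior μ (𝒮.p s)) τ0 τ1 (σ τ0 τ1 s)
  firm0opt : ∀ ψ : Measure ℝ, IsPriceStrategy ψ → 𝒮.Pi0 μ ψ φ1 σ ≤ 𝒮.Pi0 μ φ0 φ1 σ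
  firm1opt : ∀ ψ : Measure ℝ, IsPriceStrategy ψ → 𝒮.Pi1 μ φ0 ψ σ ≤ 𝒮.Pi1 μ φ0 φ1 σ

/-- A deterrence equilibrium: an SPE in which some firm sells with probability zero. -/
def IsDeterrence (𝒮 : SignalStructure S) (μ : ℝ) (φ0 φ1 : Measure ℝ) (σ : CStrategy S) :
    Prop :=
  𝒮.IsSPE μ φ0 φ1 σ ∧
    (𝒮.actProbMix μ φ0 φ1 σ CAction.buy0 = 0 ∨ 𝒮.actProbMix μ φ0 φ1 σ CAction.buy1 = 0)

/-- The market is full at `(μ, σ, τ₀, τ₁)` if the consumer exits with probability zero. -/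
def MarketFull (𝒮 : SignalStructure S) (μ : ℝ) (σ : CStrategy S) (τ0 τ1 : ℝ) : Prop :=
  𝒮.Fmix μ {s | σ τ0 τ1 s = CAction.exit} = 0

open scoped Classical in
/-- The consumer's best-reply threshold `v_μ(τ₀,τ₁)` on the private belief. -/
def v (𝒮 : SignalStructure S) (μ : ℝ) (σ : CStrategy S) (τ0 τ1 : ℝ) : ℝ :=
  if 𝒮.MarketFull μ σ τ0 τ1 then
    (1 - μ) * (1 + τ0 - τ1) / (2 * μ - (2 * μ - 1) * (1 + τ0 - τ1))
  else (1 - μ) * τ0 / (μ - (2 * μ - 1) * τ0)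

end SignalStructure

section Stmt0Aux

open SignalStructure

variable {S : Type} [MeasurableSpace S]

theorem stmt0aux_p_mem (𝒮 : SignalStructure S) (s : S) : 𝒮.p s ∈ Icc (0:ℝ) 1 := by
  simp only [SignalStructure.p]
  constructor
  · positivity
  · apply div_le_one_of_le₀
    · exact le_add_of_nonneg_right ENNReal.toReal_nonneg
    · positivity

theorem stmt0aux_meas_p (𝒮 : SignalStructure S) : Measurable 𝒮.p := by
  exact ((Measure.measurable_rnDeriv _ _).ennreal_toReal).div
    (((Measure.measurable_rnDeriv _ _).ennreal_toReal).add
      ((Measure.measurable_rnDeriv _ _).ennreal_toReal))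

/-- The belief threshold corresponding to a posterior threshold `t`. -/
def stmt0X (μ t : ℝ) : ℝ := t * (1 - μ) / (t * (1 - μ) + μ * (1 - t))

theorem stmt0aux_E_pos {μ t : ℝ} (hμ : μ ∈ Ioo (0:ℝ) 1) (ht : t ∈ Icc (0:ℝ) 1) :
    0 < t * (1 - μ) + μ * (1 - t) := by
  rcases eq_or_lt_of_le ht.2 with h1 | h1
  · subst h1; nlinarith [hμ.2]
  · nlinarith [mul_pos hμ.1 (sub_pos.2 h1), mul_nonneg ht.1 (sub_nonneg.2 hμ.2.le)]

theorem stmt0aux_D_pos {μ q : ℝ} (hμ : μ ∈ Ioo (0:ℝ) 1) (hq : q ∈ Icc (0:ℝ) 1) :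
    0 < μ * q + (1 - μ) * (1 - q) := by
  rcases eq_or_lt_of_le hq.2 with h1 | h1
  · subst h1; nlinarith [hμ.1]
  · nlinarith [mul_pos (sub_pos.2 hμ.2) (sub_pos.2 h1), mul_nonneg hμ.1.le hq.1]

theorem stmt0aux_lt_posterior_iff {μ q t : ℝ} (hμ : μ ∈ Ioo (0:ℝ) 1) (hq : q ∈ Icc (0:ℝ) 1)
    (ht : t ∈ Icc (0:ℝ) 1) : t < posterior μ q ↔ stmt0X μ t < q := by
  have hD := stmt0aux_D_pos hμ hq
  have hE := stmt0aux_E_pos hμ ht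
  rw [posterior, stmt0X, lt_div_iff₀ hD, div_lt_iff₀ hE]
  constructor <;> intro h <;> nlinarith [h]

theorem stmt0aux_posterior_lt_iff {μ q t : ℝ} (hμ : μ ∈ Ioo (0:ℝ) 1) (hq : q ∈ Icc (0:ℝ) 1)
    (ht : t ∈ Icc (0:ℝ) 1) : posterior μ q < t ↔ q < stmt0X μ t := by
  have hD := stmt0aux_D_pos hμ hq
  have hE := stmt0aux_E_pos hμ ht
  rw [posterior, stmt0X, div_lt_iff₀ hD, lt_div_iff₀ hE]
  constructor <;> intro h <;> nlinarith [h]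

theorem stmt0X_mem_Ioo {μ t : ℝ} (hμ : μ ∈ Ioo (0:ℝ) 1) (ht : t ∈ Ioo (0:ℝ) 1) :
    stmt0X μ t ∈ Ioo (0:ℝ) 1 := by
  have hE := stmt0aux_E_pos hμ ⟨ht.1.le, ht.2.le⟩
  constructor
  · exact div_pos (mul_pos ht.1 (by linarith [hμ.2])) hE
  · rw [stmt0X, div_lt_one hE]; nlinarith [mul_pos hμ.1 (sub_pos.2 ht.2)]

theorem stmt0aux_ref_prob (𝒮 : SignalStructure S) : IsProbabilityMeasure 𝒮.ref := by
  haveI := 𝒮.prob0; haveI := 𝒮.prob1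
  constructor
  simp only [SignalStructure.ref, Measure.smul_apply, Measure.add_apply, measure_univ,
    smul_eq_mul]
  rw [one_add_one_eq_two, ENNReal.inv_mul_cancel (by norm_num) (by norm_num)]

theorem stmt0aux_F0_ac_ref (𝒮 : SignalStructure S) : 𝒮.F0 ≪ 𝒮.ref := by
  intro A hA
  simp only [SignalStructure.ref, Measure.smul_apply, Measure.add_apply, smul_eq_mul,
    mul_eq_zero, ENNReal.inv_eq_zero, ENNReal.ofNat_ne_top, false_or, add_eq_zero] at hA
  exact hA.1

theorem stmt0aux_F1_ac_ref (𝒮 : SignalStructure S) : 𝒮.F1 ≪ 𝒮.ref := by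
  intro A hA
  simp only [SignalStructure.ref, Measure.smul_apply, Measure.add_apply, smul_eq_mul,
    mul_eq_zero, ENNReal.inv_eq_zero, ENNReal.ofNat_ne_top, false_or, add_eq_zero] at hA
  exact hA.2

theorem stmt0aux_atom_zero (𝒮 : SignalStructure S) :
    𝒮.F0 {s | 𝒮.p s = 0} = 0 ∧ 𝒮.F1 {s | 𝒮.p s = 0} = 0 := by
  haveI := 𝒮.prob0; haveI := 𝒮.prob1; haveI := stmt0aux_ref_prob 𝒮
  have hpos : ∀ᵐ s ∂𝒮.F0, 0 < 𝒮.f0 s := Measure.rnDeriv_pos (stmt0aux_F0_ac_ref 𝒮)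
  have hlt : ∀ᵐ s ∂𝒮.ref, 𝒮.f0 s < ⊤ := Measure.rnDeriv_lt_top _ _
  have key : ∀ᵐ s ∂𝒮.F0, 𝒮.p s ≠ 0 := by
    filter_upwards [hpos, ((stmt0aux_F0_ac_ref 𝒮).ae_le hlt : ∀ᵐ s ∂𝒮.F0, 𝒮.f0 s < ⊤)]
      with s h1 h2
    have ha : 0 < (𝒮.f0 s).toReal := ENNReal.toReal_pos h1.ne' h2.ne
    have hp : 0 < 𝒮.p s := by
      simp only [SignalStructure.p]
      exact div_pos ha (lt_of_lt_of_le ha (le_add_of_nonneg_right ENNReal.toReal_nonneg))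
    exact hp.ne'
  exact ⟨measure_eq_zero_iff_ae_notMem.2 key,
    measure_eq_zero_iff_ae_notMem.2 (key.filter_mono 𝒮.ac10.ae_le)⟩

theorem stmt0aux_atom_one (𝒮 : SignalStructure S) :
    𝒮.F0 {s | 𝒮.p s = 1} = 0 ∧ 𝒮.F1 {s | 𝒮.p s = 1} = 0 := by
  haveI := 𝒮.prob0; haveI := 𝒮.prob1; haveI := stmt0aux_ref_prob 𝒮
  have hpos : ∀ᵐ s ∂𝒮.F1, 0 < 𝒮.f1 s := Measure.rnDeriv_pos (stmt0aux_F1_ac_ref 𝒮)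
  have hlt : ∀ᵐ s ∂𝒮.ref, 𝒮.f1 s < ⊤ := Measure.rnDeriv_lt_top _ _
  have key : ∀ᵐ s ∂𝒮.F1, 𝒮.p s ≠ 1 := by
    filter_upwards [hpos, ((stmt0aux_F1_ac_ref 𝒮).ae_le hlt : ∀ᵐ s ∂𝒮.F1, 𝒮.f1 s < ⊤)]
      with s h1 h2
    have hb : 0 < (𝒮.f1 s).toReal := ENNReal.toReal_pos h1.ne' h2.ne
    have hp : 𝒮.p s < 1 := by
      simp only [SignalStructure.p]
      rw [div_lt_one (lt_of_lt_of_le hb (le_add_of_nonneg_left ENNReal.toReal_nonneg))]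
      linarith
    exact hp.ne
  exact ⟨measure_eq_zero_iff_ae_notMem.2 (key.filter_mono 𝒮.ac01.ae_le),
    measure_eq_zero_iff_ae_notMem.2 key⟩

theorem stmt0aux_atom_interior (𝒮 : SignalStructure S) (F : Measure S) [IsFiniteMeasure F]
    (x : ℝ) (hc : ContinuousAt (fun y => (F {s | 𝒮.p s < y}).toReal) x) :
    F {s | 𝒮.p s = x} = 0 := by
  have hmp := stmt0aux_meas_p 𝒮
  have hkey : ∀ᶠ y in 𝓝[>] x,
      (F {s | 𝒮.p s < x}).toReal + (F {s | 𝒮.p s = x}).toReal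
        ≤ (F {s | 𝒮.p s < y}).toReal := by
    filter_upwards [eventually_mem_nhdsWithin] with y hy
    have hxy : x < y := hy
    have hdisj : Disjoint {s | 𝒮.p s < x} {s | 𝒮.p s = x} := by
      rw [Set.disjoint_left]
      intro s hs1 hs2
      simp only [mem_setOf_eq] at hs1 hs2
      rw [hs2] at hs1
      exact lt_irrefl x hs1
    have hmeas : MeasurableSet {s | 𝒮.p s = x} := hmp (measurableSet_singleton x)
    have hsub : {s | 𝒮.p s < x} ∪ {s | 𝒮.p s = x} ⊆ {s | 𝒮.p s < y} := by
      rintro s (hs | hs) <;> simp only [mem_setOf_eq] at hs ⊢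
      · exact lt_trans hs hxy
      · rw [hs]; exact hxy
    have h1 : F {s | 𝒮.p s < x} + F {s | 𝒮.p s = x} ≤ F {s | 𝒮.p s < y} := by
      rw [← measure_union hdisj hmeas]
      exact measure_mono hsub
    have h2 := ENNReal.toReal_mono (measure_ne_top F _) h1
    rwa [ENNReal.toReal_add (measure_ne_top F _) (measure_ne_top F _)] at h2
  have htend : Tendsto (fun y => (F {s | 𝒮.p s < y}).toReal) (𝓝[>] x)
      (𝓝 ((F {s | 𝒮.p s < x}).toReal)) := hc.tendsto.mono_left nhdsWithin_le_nhds
  have hle := ge_of_tendsto htend hkey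
  have ha0 : (F {s | 𝒮.p s = x}).toReal = 0 :=
    le_antisymm (by linarith) ENNReal.toReal_nonneg
  rcases (ENNReal.toReal_eq_zero_iff _).1 ha0 with h | h
  · exact h
  · exact absurd h (measure_ne_top F _)

theorem stmt0aux_Fmix_apply (𝒮 : SignalStructure S) (μ : ℝ) (A : Set S) :
    𝒮.Fmix μ A = ENNReal.ofReal μ * 𝒮.F0 A + ENNReal.ofReal (1 - μ) * 𝒮.F1 A := by
  simp [SignalStructure.Fmix, Measure.add_apply, Measure.smul_apply, smul_eq_mul]

theorem stmt0aux_Fmix_null (𝒮 : SignalStructure S) (μ : ℝ) {A : Set S}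
    (h0 : 𝒮.F0 A = 0) (h1 : 𝒮.F1 A = 0) : 𝒮.Fmix μ A = 0 := by
  rw [stmt0aux_Fmix_apply, h0, h1]; simp

theorem stmt0aux_Fmix_prob (𝒮 : SignalStructure S) {μ : ℝ} (hμ : μ ∈ Ioo (0:ℝ) 1) :
    IsProbabilityMeasure (𝒮.Fmix μ) := by
  haveI := 𝒮.prob0; haveI := 𝒮.prob1
  constructor
  rw [stmt0aux_Fmix_apply, measure_univ, measure_univ, mul_one, mul_one,
    ← ENNReal.ofReal_add (by linarith [hμ.1]) (by linarith [hμ.2])]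
  norm_num

theorem stmt0aux_Fmix_atom (𝒮 : SignalStructure S) {g0 g1 : ℝ → ℝ}
    (hA : 𝒮.Assumption1 g0 g1) (hub : 𝒮.Unbounded) (μ : ℝ) (x : ℝ) :
    𝒮.Fmix μ {s | 𝒮.p s = x} = 0 := by
  haveI := 𝒮.prob0; haveI := 𝒮.prob1
  by_cases hx : x ∈ Ioo (0:ℝ) 1
  · have hIoo : x ∈ Ioo 𝒮.alphaLo 𝒮.alphaHi := by rw [hub.1, hub.2]; exact hx
    refine stmt0aux_Fmix_null 𝒮 μ ?_ ?_
    · exact stmt0aux_atom_interior 𝒮 𝒮.F0 x (hA.hasDeriv0 x hIoo).continuousAt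
    · exact stmt0aux_atom_interior 𝒮 𝒮.F1 x (hA.hasDeriv1 x hIoo).continuousAt
  · by_cases hx0 : x = 0
    · subst hx0
      exact stmt0aux_Fmix_null 𝒮 μ (stmt0aux_atom_zero 𝒮).1 (stmt0aux_atom_zero 𝒮).2
    by_cases hx1 : x = 1
    · subst hx1
      exact stmt0aux_Fmix_null 𝒮 μ (stmt0aux_atom_one 𝒮).1 (stmt0aux_atom_one 𝒮).2
    have hempty : {s | 𝒮.p s = x} = ∅ := by
      apply eq_empty_iff_forall_notMem.2
      intro s hs
      have hm := stmt0aux_p_mem 𝒮 s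
      simp only [mem_setOf_eq] at hs
      subst hs
      simp only [mem_Ioo, not_and_or, not_lt] at hx
      rcases hx with h | h
      · exact hx0 (le_antisymm h hm.1)
      · exact hx1 (le_antisymm hm.2 h)
    rw [hempty, measure_empty]

theorem stmt0aux_tie_null (𝒮 : SignalStructure S) {g0 g1 : ℝ → ℝ}
    (hA : 𝒮.Assumption1 g0 g1) (hub : 𝒮.Unbounded) {μ : ℝ} (hμ : μ ∈ Ioo (0:ℝ) 1)
    {t : ℝ} (ht : t ∈ Icc (0:ℝ) 1) :
    𝒮.Fmix μ {s | posterior μ (𝒮.p s) = t} = 0 := by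
  refine measure_mono_null (fun s hs => ?_) (stmt0aux_Fmix_atom 𝒮 hA hub μ (stmt0X μ t))
  simp only [mem_setOf_eq] at hs ⊢
  have h1 := stmt0aux_lt_posterior_iff hμ (stmt0aux_p_mem 𝒮 s) ht
  have h2 := stmt0aux_posterior_lt_iff hμ (stmt0aux_p_mem 𝒮 s) ht
  have hle1 : 𝒮.p s ≤ stmt0X μ t :=
    not_lt.1 fun h => absurd (h1.2 h) (by rw [hs]; exact lt_irrefl t)
  have hle2 : stmt0X μ t ≤ 𝒮.p s :=
    not_lt.1 fun h => absurd (h2.2 h) (by rw [hs]; exact lt_irrefl t)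
  exact le_antisymm hle1 hle2

/-- Threshold for buying from firm 0. -/
def stmt0T (τ : ℝ × ℝ) : ℝ := max τ.1 ((1 + τ.1 - τ.2) / 2)

/-- Threshold for buying from firm 1. -/
def stmt0U (τ : ℝ × ℝ) : ℝ := min (1 - τ.2) ((1 + τ.1 - τ.2) / 2)

/-- The probability that the private belief posterior exceeds `r`. -/
def stmt0W (𝒮 : SignalStructure S) (μ : ℝ) (r : ℝ) : ℝ :=
  (𝒮.Fmix μ {s | r < posterior μ (𝒮.p s)}).toReal

/-- The probability that the private belief posterior is below `r`. -/
def stmt0W' (𝒮 : SignalStructure S) (μ : ℝ) (r : ℝ) : ℝ :=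
  (𝒮.Fmix μ {s | posterior μ (𝒮.p s) < r}).toReal

theorem stmt0aux_actProb0_eq (𝒮 : SignalStructure S) {g0 g1 : ℝ → ℝ}
    (hA : 𝒮.Assumption1 g0 g1) (hub : 𝒮.Unbounded) {μ : ℝ} (hμ : μ ∈ Ioo (0:ℝ) 1)
    {φ0 φ1 : Measure ℝ} {σ : CStrategy S} (hSPE : 𝒮.IsSPE μ φ0 φ1 σ)
    {τ0 τ1 : ℝ} (hτ0 : τ0 ∈ Icc (0:ℝ) 1) (hτ1 : τ1 ∈ Icc (0:ℝ) 1) :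
    𝒮.actProb μ σ τ0 τ1 CAction.buy0 = stmt0W 𝒮 μ (stmt0T (τ0, τ1)) := by
  have ht : stmt0T (τ0, τ1) ∈ Icc (0:ℝ) 1 := by
    simp only [stmt0T]
    constructor
    · exact le_trans hτ0.1 (le_max_left _ _)
    · exact max_le hτ0.2 (by linarith [hτ1.1, hτ0.2])
  have hbr := hSPE.consumerBR τ0 hτ0 τ1 hτ1
  have htie := measure_eq_zero_iff_ae_notMem.1 (stmt0aux_tie_null 𝒮 hA hub hμ ht)
  simp only [SignalStructure.actProb, stmt0W]
  congr 1
  apply measure_congr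
  rw [eventuallyEq_set]
  filter_upwards [hbr, htie] with s hs hne
  have hne' : posterior μ (𝒮.p s) ≠ stmt0T (τ0, τ1) := hne
  constructor
  · intro hmem
    have h : σ τ0 τ1 s = CAction.buy0 := hmem
    have h1 := hs CAction.exit
    have h2 := hs CAction.buy1
    rw [h] at h1 h2
    simp only [cUtil] at h1 h2
    show stmt0T (τ0, τ1) < posterior μ (𝒮.p s)
    simp only [stmt0T]
    refine lt_of_le_of_ne (max_le (by linarith) (by linarith)) fun hcc => hne' hcc.symm
  · intro hmem
    have h : stmt0T (τ0, τ1) < posterior μ (𝒮.p s) := hmem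
    simp only [stmt0T] at h
    have h0 : τ0 < posterior μ (𝒮.p s) := lt_of_le_of_lt (le_max_left _ _) h
    have h1 : (1 + τ0 - τ1) / 2 < posterior μ (𝒮.p s) := lt_of_le_of_lt (le_max_right _ _) h
    show σ τ0 τ1 s = CAction.buy0
    rcases hcase : σ τ0 τ1 s with _ | _ | _
    · rfl
    · have h2 := hs CAction.buy0
      rw [hcase] at h2
      simp only [cUtil] at h2
      linarith
    · have h2 := hs CAction.buy0
      rw [hcase] at h2
      simp only [cUtil] at h2
      linarith

theorem stmt0aux_actProb1_eq (𝒮 : SignalStructure S) {g0 g1 : ℝ → ℝ}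
    (hA : 𝒮.Assumption1 g0 g1) (hub : 𝒮.Unbounded) {μ : ℝ} (hμ : μ ∈ Ioo (0:ℝ) 1)
    {φ0 φ1 : Measure ℝ} {σ : CStrategy S} (hSPE : 𝒮.IsSPE μ φ0 φ1 σ)
    {τ0 τ1 : ℝ} (hτ0 : τ0 ∈ Icc (0:ℝ) 1) (hτ1 : τ1 ∈ Icc (0:ℝ) 1) :
    𝒮.actProb μ σ τ0 τ1 CAction.buy1 = stmt0W' 𝒮 μ (stmt0U (τ0, τ1)) := by
  have hu : stmt0U (τ0, τ1) ∈ Icc (0:ℝ) 1 := by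
    simp only [stmt0U]
    constructor
    · exact le_min (by linarith [hτ1.2]) (by linarith [hτ0.1, hτ1.2])
    · exact le_trans (min_le_left _ _) (by linarith [hτ1.1])
  have hbr := hSPE.consumerBR τ0 hτ0 τ1 hτ1
  have htie := measure_eq_zero_iff_ae_notMem.1 (stmt0aux_tie_null 𝒮 hA hub hμ hu)
  simp only [SignalStructure.actProb, stmt0W']
  congr 1
  apply measure_congr
  rw [eventuallyEq_set]
  filter_upwards [hbr, htie] with s hs hne
  have hne' : posterior μ (𝒮.p s) ≠ stmt0U (τ0, τ1) := hne
  constructor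
  · intro hmem
    have h : σ τ0 τ1 s = CAction.buy1 := hmem
    have h1 := hs CAction.exit
    have h2 := hs CAction.buy0
    rw [h] at h1 h2
    simp only [cUtil] at h1 h2
    show posterior μ (𝒮.p s) < stmt0U (τ0, τ1)
    simp only [stmt0U]
    refine lt_of_le_of_ne (le_min (by linarith) (by linarith)) (by simpa [stmt0U] using hne')
  · intro hmem
    have h : posterior μ (𝒮.p s) < stmt0U (τ0, τ1) := hmem
    have h0 : posterior μ (𝒮.p s) < 1 - τ1 :=
      lt_of_lt_of_le h ((min_le_left _ _).trans_eq rfl)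
    have h1 : posterior μ (𝒮.p s) < (1 + τ0 - τ1) / 2 :=
      lt_of_lt_of_le h (min_le_right _ _)
    show σ τ0 τ1 s = CAction.buy1
    rcases hcase : σ τ0 τ1 s with _ | _ | _
    · have h2 := hs CAction.buy1
      rw [hcase] at h2
      simp only [cUtil] at h2
      linarith
    · rfl
    · have h2 := hs CAction.buy1
      rw [hcase] at h2
      simp only [cUtil] at h2
      linarith

theorem stmt0aux_W_anti (𝒮 : SignalStructure S) {μ : ℝ} (hμ : μ ∈ Ioo (0:ℝ) 1) :
    Antitone (stmt0W 𝒮 μ) := by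
  haveI := stmt0aux_Fmix_prob 𝒮 hμ
  intro a b hab
  exact ENNReal.toReal_mono (measure_ne_top _ _)
    (measure_mono fun s hs => lt_of_le_of_lt hab hs)

theorem stmt0aux_W'_mono (𝒮 : SignalStructure S) {μ : ℝ} (hμ : μ ∈ Ioo (0:ℝ) 1) :
    Monotone (stmt0W' 𝒮 μ) := by
  haveI := stmt0aux_Fmix_prob 𝒮 hμ
  intro a b hab
  exact ENNReal.toReal_mono (measure_ne_top _ _)
    (measure_mono fun s hs => lt_of_lt_of_le hs hab)

theorem stmt0aux_W_nonneg (𝒮 : SignalStructure S) (μ r : ℝ) : 0 ≤ stmt0W 𝒮 μ r :=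
  ENNReal.toReal_nonneg

theorem stmt0aux_W'_nonneg (𝒮 : SignalStructure S) (μ r : ℝ) : 0 ≤ stmt0W' 𝒮 μ r :=
  ENNReal.toReal_nonneg

theorem stmt0aux_W_le_one (𝒮 : SignalStructure S) {μ : ℝ} (hμ : μ ∈ Ioo (0:ℝ) 1) (r : ℝ) :
    stmt0W 𝒮 μ r ≤ 1 := by
  haveI := stmt0aux_Fmix_prob 𝒮 hμ
  have h := ENNReal.toReal_mono (measure_ne_top (𝒮.Fmix μ) univ)
    (measure_mono (subset_univ {s | r < posterior μ (𝒮.p s)}))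
  rwa [measure_univ, ENNReal.toReal_one] at h

theorem stmt0aux_W'_le_one (𝒮 : SignalStructure S) {μ : ℝ} (hμ : μ ∈ Ioo (0:ℝ) 1) (r : ℝ) :
    stmt0W' 𝒮 μ r ≤ 1 := by
  haveI := stmt0aux_Fmix_prob 𝒮 hμ
  have h := ENNReal.toReal_mono (measure_ne_top (𝒮.Fmix μ) univ)
    (measure_mono (subset_univ {s | posterior μ (𝒮.p s) < r}))
  rwa [measure_univ, ENNReal.toReal_one] at h

theorem stmt0aux_W_pos (𝒮 : SignalStructure S) (hub : 𝒮.Unbounded)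
    {μ : ℝ} (hμ : μ ∈ Ioo (0:ℝ) 1) : 0 < stmt0W 𝒮 μ (3 / 4) := by
  haveI := 𝒮.prob0; haveI := 𝒮.prob1
  haveI := stmt0aux_Fmix_prob 𝒮 hμ
  have hX : stmt0X μ (3 / 4) ∈ Ioo (0:ℝ) 1 := stmt0X_mem_Ioo hμ (by norm_num)
  obtain ⟨x, hGx, hXx⟩ : ∃ x, 𝒮.G0 x < 1 ∧ stmt0X μ (3 / 4) < x := by
    by_contra hc
    push_neg at hc
    have h1 : 𝒮.alphaHi ≤ stmt0X μ (3 / 4) := Real.sSup_le (fun y hy => hc y hy) hX.1.le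
    rw [hub.2] at h1
    linarith [hX.2]
  have hF0pos : 𝒮.F0 {s | stmt0X μ (3 / 4) < 𝒮.p s} ≠ 0 := by
    intro h0
    have hcov : (univ : Set S) ⊆ {s | 𝒮.p s < x} ∪ {s | stmt0X μ (3 / 4) < 𝒮.p s} := by
      intro s _
      by_cases hsx : 𝒮.p s < x
      · exact Or.inl hsx
      · exact Or.inr (lt_of_lt_of_le hXx (not_lt.1 hsx))
    have h1 : (1 : ℝ≥0∞) ≤ 𝒮.F0 {s | 𝒮.p s < x} := by
      calc (1 : ℝ≥0∞) = 𝒮.F0 univ := measure_univ.symm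
      _ ≤ 𝒮.F0 ({s | 𝒮.p s < x} ∪ {s | stmt0X μ (3 / 4) < 𝒮.p s}) := measure_mono hcov
      _ ≤ 𝒮.F0 {s | 𝒮.p s < x} + 𝒮.F0 {s | stmt0X μ (3 / 4) < 𝒮.p s} := measure_union_le _ _
      _ = 𝒮.F0 {s | 𝒮.p s < x} := by rw [h0, add_zero]
    have h2 : (1 : ℝ) ≤ 𝒮.G0 x := by
      have h3 := ENNReal.toReal_mono (measure_ne_top _ _) h1
      simpa [SignalStructure.G0] using h3
    linarith
  have hsub : {s | stmt0X μ (3 / 4) < 𝒮.p s} ⊆ {s | (3:ℝ) / 4 < posterior μ (𝒮.p s)} :=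
    fun s hs => (stmt0aux_lt_posterior_iff hμ (stmt0aux_p_mem 𝒮 s) (by norm_num)).2 hs
  refine ENNReal.toReal_pos ?_ (measure_ne_top _ _)
  intro h0
  apply hF0pos
  have hle : ENNReal.ofReal μ * 𝒮.F0 {s | stmt0X μ (3 / 4) < 𝒮.p s}
      ≤ 𝒮.Fmix μ {s | (3:ℝ) / 4 < posterior μ (𝒮.p s)} := by
    rw [stmt0aux_Fmix_apply]
    exact le_trans (mul_le_mul_right (measure_mono hsub) _) le_self_add
  rw [h0, le_zero_iff] at hle
  rcases mul_eq_zero.1 hle with h | h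
  · exact absurd h (ENNReal.ofReal_pos.2 hμ.1).ne'
  · exact h

theorem stmt0aux_W'_pos (𝒮 : SignalStructure S) (hub : 𝒮.Unbounded)
    {μ : ℝ} (hμ : μ ∈ Ioo (0:ℝ) 1) : 0 < stmt0W' 𝒮 μ (1 / 4) := by
  haveI := 𝒮.prob0; haveI := 𝒮.prob1
  haveI := stmt0aux_Fmix_prob 𝒮 hμ
  have hX : stmt0X μ (1 / 4) ∈ Ioo (0:ℝ) 1 := stmt0X_mem_Ioo hμ (by norm_num)
  obtain ⟨x, hGx, hXx⟩ : ∃ x, 0 < 𝒮.G0 x ∧ x < stmt0X μ (1 / 4) := by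
    by_contra hc
    push_neg at hc
    have hne : {y : ℝ | 0 < 𝒮.G0 y}.Nonempty := by
      refine ⟨2, ?_⟩
      have huniv : {s | 𝒮.p s < 2} = univ := by
        apply eq_univ_iff_forall.2
        intro s
        have := stmt0aux_p_mem 𝒮 s
        simp only [mem_setOf_eq]
        linarith [this.2]
      simp only [mem_setOf_eq, SignalStructure.G0, huniv, measure_univ, ENNReal.toReal_one]
      norm_num
    have h1 : stmt0X μ (1 / 4) ≤ 𝒮.alphaLo := le_csInf hne (fun y hy => hc y hy)
    rw [hub.1] at h1
    linarith [hX.1]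
  have hF0pos : 𝒮.F0 {s | 𝒮.p s < stmt0X μ (1 / 4)} ≠ 0 := by
    intro h0
    have hsub0 : {s | 𝒮.p s < x} ⊆ {s | 𝒮.p s < stmt0X μ (1 / 4)} :=
      fun s hs => lt_trans hs hXx
    have h1 : 𝒮.F0 {s | 𝒮.p s < x} = 0 := measure_mono_null hsub0 h0
    rw [SignalStructure.G0, h1] at hGx
    simp at hGx
  have hsub : {s | 𝒮.p s < stmt0X μ (1 / 4)} ⊆ {s | posterior μ (𝒮.p s) < (1:ℝ) / 4} :=
    fun s hs => (stmt0aux_posterior_lt_iff hμ (stmt0aux_p_mem 𝒮 s) (by norm_num)).2 hs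
  refine ENNReal.toReal_pos ?_ (measure_ne_top _ _)
  intro h0
  apply hF0pos
  have hle : ENNReal.ofReal μ * 𝒮.F0 {s | 𝒮.p s < stmt0X μ (1 / 4)}
      ≤ 𝒮.Fmix μ {s | posterior μ (𝒮.p s) < (1:ℝ) / 4} := by
    rw [stmt0aux_Fmix_apply]
    exact le_trans (mul_le_mul_right (measure_mono hsub) _) le_self_add
  rw [h0, le_zero_iff] at hle
  rcases mul_eq_zero.1 hle with h | h
  · exact absurd h (ENNReal.ofReal_pos.2 hμ.1).ne'
  · exact h

theorem stmt0aux_buy0 (𝒮 : SignalStructure S) {g0 g1 : ℝ → ℝ}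
    (hA : 𝒮.Assumption1 g0 g1) (hub : 𝒮.Unbounded)
    {μ : ℝ} (hμ : μ ∈ Ioo (0:ℝ) 1) {φ0 φ1 : Measure ℝ} {σ : CStrategy S}
    (hSPE : 𝒮.IsSPE μ φ0 φ1 σ) :
    0 < 𝒮.actProbMix μ φ0 φ1 σ CAction.buy0 := by
  haveI := 𝒮.prob0; haveI := 𝒮.prob1
  haveI := stmt0aux_Fmix_prob 𝒮 hμ
  obtain ⟨hφ0p, hφ0s⟩ := hSPE.strat0
  obtain ⟨hφ1p, hφ1s⟩ := hSPE.strat1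
  haveI := hφ0p; haveI := hφ1p
  have hWanti := stmt0aux_W_anti 𝒮 hμ
  have hWnn := stmt0aux_W_nonneg 𝒮 μ
  have hWle := stmt0aux_W_le_one 𝒮 hμ
  have hTm : Measurable stmt0T := by
    unfold stmt0T
    exact measurable_fst.max
      (((measurable_const.add measurable_fst).sub measurable_snd).div_const 2)
  have hHtm : Measurable fun τ : ℝ × ℝ => stmt0W 𝒮 μ (stmt0T τ) :=
    hWanti.measurable.comp hTm
  -- a.e. the price pair is in the unit square
  have hns0 : (φ0.prod φ1) ((Icc (0:ℝ) 1)ᶜ ×ˢ (univ : Set ℝ)) = 0 := by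
    rw [Measure.prod_prod, measure_compl measurableSet_Icc (measure_ne_top _ _),
      measure_univ, hφ0s]
    simp
  have hns1 : (φ0.prod φ1) ((univ : Set ℝ) ×ˢ (Icc (0:ℝ) 1)ᶜ) = 0 := by
    rw [Measure.prod_prod, measure_compl measurableSet_Icc (measure_ne_top _ _),
      measure_univ, hφ1s]
    simp
  have haesq : ∀ᵐ τ : ℝ × ℝ ∂(φ0.prod φ1), τ.1 ∈ Icc (0:ℝ) 1 ∧ τ.2 ∈ Icc (0:ℝ) 1 := by
    filter_upwards [measure_eq_zero_iff_ae_notMem.1 hns0, measure_eq_zero_iff_ae_notMem.1 hns1]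
      with τ h1 h2
    constructor
    · by_contra hcc; exact h1 ⟨hcc, mem_univ _⟩
    · by_contra hcc; exact h2 ⟨mem_univ _, hcc⟩
  have heq : (fun τ : ℝ × ℝ => 𝒮.actProb μ σ τ.1 τ.2 CAction.buy0)
      =ᵐ[φ0.prod φ1] fun τ => stmt0W 𝒮 μ (stmt0T τ) := by
    filter_upwards [haesq] with τ hτ
    exact stmt0aux_actProb0_eq 𝒮 hA hub hμ hSPE hτ.1 hτ.2
  have hint : Integrable (fun τ : ℝ × ℝ => stmt0W 𝒮 μ (stmt0T τ)) (φ0.prod φ1) := by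
    refine Integrable.mono' (integrable_const 1) hHtm.aestronglyMeasurable ?_
    refine ae_of_all _ fun τ => ?_
    rw [Real.norm_eq_abs, abs_of_nonneg (hWnn _)]
    exact hWle _
  have hmix : 𝒮.actProbMix μ φ0 φ1 σ CAction.buy0
      = ∫ τ : ℝ × ℝ, stmt0W 𝒮 μ (stmt0T τ) ∂(φ0.prod φ1) := integral_congr_ae heq
  have hWpos := stmt0aux_W_pos 𝒮 hub hμ
  by_contra hcon
  push_neg at hcon
  rw [hmix] at hcon
  have hz : ∫ τ : ℝ × ℝ, stmt0W 𝒮 μ (stmt0T τ) ∂(φ0.prod φ1) = 0 :=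
    le_antisymm hcon (integral_nonneg fun τ => hWnn _)
  have hae0 : (fun τ : ℝ × ℝ => stmt0W 𝒮 μ (stmt0T τ)) =ᵐ[φ0.prod φ1] 0 :=
    (integral_eq_zero_iff_of_nonneg (fun τ => hWnn _) hint).1 hz
  have hPi0 : 𝒮.Pi0 μ φ0 φ1 σ = 0 := by
    have hz2 : (fun τ : ℝ × ℝ => 𝒮.actProb μ σ τ.1 τ.2 CAction.buy0 * τ.1)
        =ᵐ[φ0.prod φ1] fun _ => (0:ℝ) := by
      filter_upwards [heq, hae0] with τ h1 h2
      simp only [Pi.zero_apply] at h2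
      rw [h1, h2, zero_mul]
    simp only [SignalStructure.Pi0]
    rw [integral_congr_ae hz2, integral_zero]
  -- deviation to the price 1/2
  haveI : IsProbabilityMeasure (Measure.dirac (2⁻¹ : ℝ)) := Measure.dirac.isProbabilityMeasure
  have hmemc : (2⁻¹ : ℝ) ∈ Icc (0:ℝ) 1 := by norm_num
  have hψ : IsPriceStrategy (Measure.dirac (2⁻¹ : ℝ)) := by
    refine ⟨inferInstance, ?_⟩
    rw [Measure.dirac_apply' _ measurableSet_Icc, Set.indicator_of_mem hmemc]
    rfl
  have hd1 : ((Measure.dirac (2⁻¹ : ℝ)).prod φ1) (({(2⁻¹ : ℝ)}ᶜ : Set ℝ) ×ˢ (univ : Set ℝ))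
      = 0 := by
    rw [Measure.prod_prod, Measure.dirac_apply' _ (measurableSet_singleton _).compl,
      Set.indicator_of_notMem (by simp)]
    simp
  have hd2 : ((Measure.dirac (2⁻¹ : ℝ)).prod φ1) ((univ : Set ℝ) ×ˢ (Icc (0:ℝ) 1)ᶜ) = 0 := by
    rw [Measure.prod_prod, measure_compl measurableSet_Icc (measure_ne_top _ _),
      measure_univ, hφ1s]
    simp
  have haed : ∀ᵐ τ : ℝ × ℝ ∂((Measure.dirac (2⁻¹ : ℝ)).prod φ1),
      τ.1 = (2⁻¹ : ℝ) ∧ τ.2 ∈ Icc (0:ℝ) 1 := by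
    filter_upwards [measure_eq_zero_iff_ae_notMem.1 hd1, measure_eq_zero_iff_ae_notMem.1 hd2]
      with τ h1 h2
    constructor
    · by_contra hcc; exact h1 ⟨hcc, mem_univ _⟩
    · by_contra hcc; exact h2 ⟨mem_univ _, hcc⟩
  have heqd : (fun τ : ℝ × ℝ => 𝒮.actProb μ σ τ.1 τ.2 CAction.buy0 * τ.1)
      =ᵐ[(Measure.dirac (2⁻¹ : ℝ)).prod φ1]
        fun τ => stmt0W 𝒮 μ (stmt0T τ) * τ.1 := by
    filter_upwards [haed] with τ hτ
    have hτ1 : τ.1 ∈ Icc (0:ℝ) 1 := by rw [hτ.1]; exact hmemc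
    rw [stmt0aux_actProb0_eq 𝒮 hA hub hμ hSPE hτ1 hτ.2]
  have hintd : Integrable (fun τ : ℝ × ℝ => stmt0W 𝒮 μ (stmt0T τ) * τ.1)
      ((Measure.dirac (2⁻¹ : ℝ)).prod φ1) := by
    refine Integrable.mono' (integrable_const 1)
      ((hHtm.mul measurable_fst).aestronglyMeasurable) ?_
    filter_upwards [haed] with τ hτ
    rw [Real.norm_eq_abs, abs_mul, hτ.1, abs_of_nonneg (hWnn _)]
    have := hWle (stmt0T τ)
    have h2 : |(2⁻¹ : ℝ)| = 2⁻¹ := by norm_num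
    rw [h2]
    nlinarith [hWnn (stmt0T τ)]
  have hrw : 𝒮.Pi0 μ (Measure.dirac (2⁻¹ : ℝ)) φ1 σ
      = ∫ τ1 : ℝ, stmt0W 𝒮 μ (stmt0T ((2⁻¹ : ℝ), τ1)) * (2⁻¹ : ℝ) ∂φ1 := by
    simp only [SignalStructure.Pi0]
    rw [integral_congr_ae heqd, MeasureTheory.integral_prod _ hintd,
      integral_dirac]
  have hIcc1 : ∀ᵐ τ1 ∂φ1, τ1 ∈ Icc (0:ℝ) 1 := by
    have hcompl : φ1 (Icc (0:ℝ) 1)ᶜ = 0 := by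
      rw [measure_compl measurableSet_Icc (measure_ne_top _ _), measure_univ, hφ1s]
      simp
    filter_upwards [measure_eq_zero_iff_ae_notMem.1 hcompl] with τ1 h
    simpa using h
  have hint2 : Integrable (fun τ1 : ℝ => stmt0W 𝒮 μ (stmt0T ((2⁻¹ : ℝ), τ1)) * (2⁻¹ : ℝ))
      φ1 := by
    refine Integrable.mono' (integrable_const 1)
      (((hHtm.comp measurable_prodMk_left).mul_const _).aestronglyMeasurable) ?_
    refine ae_of_all _ fun τ1 => ?_
    rw [Real.norm_eq_abs, abs_mul, abs_of_nonneg (hWnn _)]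
    have h2 : |(2⁻¹ : ℝ)| = 2⁻¹ := by norm_num
    rw [h2]
    nlinarith [hWnn (stmt0T ((2⁻¹ : ℝ), τ1)), hWle (stmt0T ((2⁻¹ : ℝ), τ1))]
  have hptw : ∀ᵐ τ1 ∂φ1, stmt0W 𝒮 μ (3/4) * (2⁻¹ : ℝ)
      ≤ stmt0W 𝒮 μ (stmt0T ((2⁻¹ : ℝ), τ1)) * (2⁻¹ : ℝ) := by
    filter_upwards [hIcc1] with τ1 hτ1
    have hTle : stmt0T ((2⁻¹ : ℝ), τ1) ≤ 3 / 4 := by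
      show max (2⁻¹ : ℝ) ((1 + (2⁻¹ : ℝ) - τ1) / 2) ≤ 3 / 4
      exact max_le (by norm_num) (by linarith [hτ1.1])
    exact mul_le_mul_of_nonneg_right (hWanti hTle) (by norm_num)
  have hdev : stmt0W 𝒮 μ (3/4) * (2⁻¹ : ℝ) ≤ 𝒮.Pi0 μ (Measure.dirac (2⁻¹ : ℝ)) φ1 σ := by
    rw [hrw]
    calc stmt0W 𝒮 μ (3/4) * (2⁻¹ : ℝ)
        = ∫ _τ1 : ℝ, stmt0W 𝒮 μ (3/4) * (2⁻¹ : ℝ) ∂φ1 := by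
          rw [integral_const, probReal_univ]
          simp
      _ ≤ _ := integral_mono_ae (integrable_const _) hint2 hptw
  have hopt := hSPE.firm0opt (Measure.dirac (2⁻¹ : ℝ)) hψ
  rw [hPi0] at hopt
  nlinarith [hdev, hopt, hWpos]

theorem stmt0aux_buy1 (𝒮 : SignalStructure S) {g0 g1 : ℝ → ℝ}
    (hA : 𝒮.Assumption1 g0 g1) (hub : 𝒮.Unbounded)
    {μ : ℝ} (hμ : μ ∈ Ioo (0:ℝ) 1) {φ0 φ1 : Measure ℝ} {σ : CStrategy S}
    (hSPE : 𝒮.IsSPE μ φ0 φ1 σ) :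
    0 < 𝒮.actProbMix μ φ0 φ1 σ CAction.buy1 := by
  haveI := 𝒮.prob0; haveI := 𝒮.prob1
  haveI := stmt0aux_Fmix_prob 𝒮 hμ
  obtain ⟨hφ0p, hφ0s⟩ := hSPE.strat0
  obtain ⟨hφ1p, hφ1s⟩ := hSPE.strat1
  haveI := hφ0p; haveI := hφ1p
  have hWmono := stmt0aux_W'_mono 𝒮 hμ
  have hWnn := stmt0aux_W'_nonneg 𝒮 μ
  have hWle := stmt0aux_W'_le_one 𝒮 hμ
  have hUm : Measurable stmt0U := by
    unfold stmt0U
    exact (measurable_const.sub measurable_snd).min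
      (((measurable_const.add measurable_fst).sub measurable_snd).div_const 2)
  have hHtm : Measurable fun τ : ℝ × ℝ => stmt0W' 𝒮 μ (stmt0U τ) :=
    hWmono.measurable.comp hUm
  have hns0 : (φ0.prod φ1) ((Icc (0:ℝ) 1)ᶜ ×ˢ (univ : Set ℝ)) = 0 := by
    rw [Measure.prod_prod, measure_compl measurableSet_Icc (measure_ne_top _ _),
      measure_univ, hφ0s]
    simp
  have hns1 : (φ0.prod φ1) ((univ : Set ℝ) ×ˢ (Icc (0:ℝ) 1)ᶜ) = 0 := by
    rw [Measure.prod_prod, measure_compl measurableSet_Icc (measure_ne_top _ _),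
      measure_univ, hφ1s]
    simp
  have haesq : ∀ᵐ τ : ℝ × ℝ ∂(φ0.prod φ1), τ.1 ∈ Icc (0:ℝ) 1 ∧ τ.2 ∈ Icc (0:ℝ) 1 := by
    filter_upwards [measure_eq_zero_iff_ae_notMem.1 hns0, measure_eq_zero_iff_ae_notMem.1 hns1]
      with τ h1 h2
    constructor
    · by_contra hcc; exact h1 ⟨hcc, mem_univ _⟩
    · by_contra hcc; exact h2 ⟨mem_univ _, hcc⟩
  have heq : (fun τ : ℝ × ℝ => 𝒮.actProb μ σ τ.1 τ.2 CAction.buy1)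
      =ᵐ[φ0.prod φ1] fun τ => stmt0W' 𝒮 μ (stmt0U τ) := by
    filter_upwards [haesq] with τ hτ
    exact stmt0aux_actProb1_eq 𝒮 hA hub hμ hSPE hτ.1 hτ.2
  have hint : Integrable (fun τ : ℝ × ℝ => stmt0W' 𝒮 μ (stmt0U τ)) (φ0.prod φ1) := by
    refine Integrable.mono' (integrable_const 1) hHtm.aestronglyMeasurable ?_
    refine ae_of_all _ fun τ => ?_
    rw [Real.norm_eq_abs, abs_of_nonneg (hWnn _)]
    exact hWle _
  have hmix : 𝒮.actProbMix μ φ0 φ1 σ CAction.buy1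
      = ∫ τ : ℝ × ℝ, stmt0W' 𝒮 μ (stmt0U τ) ∂(φ0.prod φ1) := integral_congr_ae heq
  have hWpos := stmt0aux_W'_pos 𝒮 hub hμ
  by_contra hcon
  push_neg at hcon
  rw [hmix] at hcon
  have hz : ∫ τ : ℝ × ℝ, stmt0W' 𝒮 μ (stmt0U τ) ∂(φ0.prod φ1) = 0 :=
    le_antisymm hcon (integral_nonneg fun τ => hWnn _)
  have hae0 : (fun τ : ℝ × ℝ => stmt0W' 𝒮 μ (stmt0U τ)) =ᵐ[φ0.prod φ1] 0 :=
    (integral_eq_zero_iff_of_nonneg (fun τ => hWnn _) hint).1 hz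
  have hPi1 : 𝒮.Pi1 μ φ0 φ1 σ = 0 := by
    have hz2 : (fun τ : ℝ × ℝ => 𝒮.actProb μ σ τ.1 τ.2 CAction.buy1 * τ.2)
        =ᵐ[φ0.prod φ1] fun _ => (0:ℝ) := by
      filter_upwards [heq, hae0] with τ h1 h2
      simp only [Pi.zero_apply] at h2
      rw [h1, h2, zero_mul]
    simp only [SignalStructure.Pi1]
    rw [integral_congr_ae hz2, integral_zero]
  haveI : IsProbabilityMeasure (Measure.dirac (2⁻¹ : ℝ)) := Measure.dirac.isProbabilityMeasure
  have hmemc : (2⁻¹ : ℝ) ∈ Icc (0:ℝ) 1 := by norm_num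
  have hψ : IsPriceStrategy (Measure.dirac (2⁻¹ : ℝ)) := by
    refine ⟨inferInstance, ?_⟩
    rw [Measure.dirac_apply' _ measurableSet_Icc, Set.indicator_of_mem hmemc]
    rfl
  have hd1 : (φ0.prod (Measure.dirac (2⁻¹ : ℝ))) ((univ : Set ℝ) ×ˢ ({(2⁻¹ : ℝ)}ᶜ : Set ℝ))
      = 0 := by
    rw [Measure.prod_prod, Measure.dirac_apply' _ (measurableSet_singleton _).compl,
      Set.indicator_of_notMem (by simp)]
    simp
  have hd2 : (φ0.prod (Measure.dirac (2⁻¹ : ℝ))) ((Icc (0:ℝ) 1)ᶜ ×ˢ (univ : Set ℝ)) = 0 := by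
    rw [Measure.prod_prod, measure_compl measurableSet_Icc (measure_ne_top _ _),
      measure_univ, hφ0s]
    simp
  have haed : ∀ᵐ τ : ℝ × ℝ ∂(φ0.prod (Measure.dirac (2⁻¹ : ℝ))),
      τ.1 ∈ Icc (0:ℝ) 1 ∧ τ.2 = (2⁻¹ : ℝ) := by
    filter_upwards [measure_eq_zero_iff_ae_notMem.1 hd1, measure_eq_zero_iff_ae_notMem.1 hd2]
      with τ h1 h2
    constructor
    · by_contra hcc; exact h2 ⟨hcc, mem_univ _⟩
    · by_contra hcc; exact h1 ⟨mem_univ _, hcc⟩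
  have heqd : (fun τ : ℝ × ℝ => 𝒮.actProb μ σ τ.1 τ.2 CAction.buy1 * τ.2)
      =ᵐ[φ0.prod (Measure.dirac (2⁻¹ : ℝ))]
        fun τ => stmt0W' 𝒮 μ (stmt0U τ) * τ.2 := by
    filter_upwards [haed] with τ hτ
    have hτ2 : τ.2 ∈ Icc (0:ℝ) 1 := by rw [hτ.2]; exact hmemc
    rw [stmt0aux_actProb1_eq 𝒮 hA hub hμ hSPE hτ.1 hτ2]
  have hintd : Integrable (fun τ : ℝ × ℝ => stmt0W' 𝒮 μ (stmt0U τ) * τ.2)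
      (φ0.prod (Measure.dirac (2⁻¹ : ℝ))) := by
    refine Integrable.mono' (integrable_const 1)
      ((hHtm.mul measurable_snd).aestronglyMeasurable) ?_
    filter_upwards [haed] with τ hτ
    rw [Real.norm_eq_abs, abs_mul, hτ.2, abs_of_nonneg (hWnn _)]
    have h2 : |(2⁻¹ : ℝ)| = 2⁻¹ := by norm_num
    rw [h2]
    nlinarith [hWnn (stmt0U τ), hWle (stmt0U τ)]
  have hinner : ∀ τ0 : ℝ, (∫ τ1 : ℝ, stmt0W' 𝒮 μ (stmt0U (τ0, τ1)) * τ1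
      ∂(Measure.dirac (2⁻¹ : ℝ)))
      = stmt0W' 𝒮 μ (stmt0U (τ0, (2⁻¹ : ℝ))) * (2⁻¹ : ℝ) := fun τ0 =>
    integral_dirac _ _
  have hrw : 𝒮.Pi1 μ φ0 (Measure.dirac (2⁻¹ : ℝ)) σ
      = ∫ τ0 : ℝ, stmt0W' 𝒮 μ (stmt0U (τ0, (2⁻¹ : ℝ))) * (2⁻¹ : ℝ) ∂φ0 := by
    simp only [SignalStructure.Pi1]
    rw [integral_congr_ae heqd, MeasureTheory.integral_prod _ hintd]
    exact integral_congr_ae (ae_of_all _ fun τ0 => hinner τ0)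
  have hIcc0 : ∀ᵐ τ0 ∂φ0, τ0 ∈ Icc (0:ℝ) 1 := by
    have hcompl : φ0 (Icc (0:ℝ) 1)ᶜ = 0 := by
      rw [measure_compl measurableSet_Icc (measure_ne_top _ _), measure_univ, hφ0s]
      simp
    filter_upwards [measure_eq_zero_iff_ae_notMem.1 hcompl] with τ0 h
    simpa using h
  have hint2 : Integrable (fun τ0 : ℝ => stmt0W' 𝒮 μ (stmt0U (τ0, (2⁻¹ : ℝ))) * (2⁻¹ : ℝ))
      φ0 := by
    refine Integrable.mono' (integrable_const 1)
      (((hHtm.comp (measurable_id.prodMk measurable_const)).mul_const _).aestronglyMeasurable)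
      ?_
    refine ae_of_all _ fun τ0 => ?_
    rw [Real.norm_eq_abs, abs_mul, abs_of_nonneg (hWnn _)]
    have h2 : |(2⁻¹ : ℝ)| = 2⁻¹ := by norm_num
    rw [h2]
    nlinarith [hWnn (stmt0U (τ0, (2⁻¹ : ℝ))), hWle (stmt0U (τ0, (2⁻¹ : ℝ)))]
  have hptw : ∀ᵐ τ0 ∂φ0, stmt0W' 𝒮 μ (1/4) * (2⁻¹ : ℝ)
      ≤ stmt0W' 𝒮 μ (stmt0U (τ0, (2⁻¹ : ℝ))) * (2⁻¹ : ℝ) := by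
    filter_upwards [hIcc0] with τ0 hτ0
    have hUge : (1:ℝ) / 4 ≤ stmt0U (τ0, (2⁻¹ : ℝ)) := by
      show (1:ℝ) / 4 ≤ min (1 - (2⁻¹ : ℝ)) ((1 + τ0 - (2⁻¹ : ℝ)) / 2)
      exact le_min (by norm_num) (by linarith [hτ0.1])
    exact mul_le_mul_of_nonneg_right (hWmono hUge) (by norm_num)
  have hdev : stmt0W' 𝒮 μ (1/4) * (2⁻¹ : ℝ)
      ≤ 𝒮.Pi1 μ φ0 (Measure.dirac (2⁻¹ : ℝ)) σ := by
    rw [hrw]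
    calc stmt0W' 𝒮 μ (1/4) * (2⁻¹ : ℝ)
        = ∫ _τ0 : ℝ, stmt0W' 𝒮 μ (1/4) * (2⁻¹ : ℝ) ∂φ0 := by
          rw [integral_const, probReal_univ]
          simp
      _ ≤ _ := integral_mono_ae (integrable_const _) hint2 hptw
  have hopt := hSPE.firm1opt (Measure.dirac (2⁻¹ : ℝ)) hψ
  rw [hPi1] at hopt
  nlinarith [hdev, hopt, hWpos]

end Stmt0Aux

/-- With unbounded signals, for every prior μ ∈ (0,1) there is no
deterrence equilibrium: in every SPE of Γ(μ), each firm is chosen by the consumer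
with positive probability. -/
theorem stmt0 {S : Type} [MeasurableSpace S] (𝒮 : SignalStructure S)
    (g0 g1 : ℝ → ℝ) (hA : 𝒮.Assumption1 g0 g1)
    (hub : 𝒮.Unbounded)
    (μ : ℝ) (hμ : μ ∈ Ioo (0:ℝ) 1)
    (φ0 φ1 : Measure ℝ) (σ : CStrategy S)
    (hSPE : 𝒮.IsSPE μ φ0 φ1 σ) :
    0 < 𝒮.actProbMix μ φ0 φ1 σ CAction.buy0 ∧
      0 < 𝒮.actProbMix μ φ0 φ1 σ CAction.buy1 :=
  ⟨stmt0aux_buy0 𝒮 hA hub hμ hSPE, stmt0aux_buy1 𝒮 hA hub hμ hSPE⟩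
end
end

section
/- Let (φ₀,φ₁,σ) be a deterrence equilibrium of the stage game Γ(μ). If Firm 0 controls the market (the consumer never buys from Firm 1), then α⁻_μ ≥ 1/2, where α⁻_μ = μα⁻/(μα⁻+(1−μ)(1−α⁻)). Symmetrically, if Firm 1 controls the market, then α⁺_μ ≤ 1/2, where α⁺_μ = μα⁺/(μα⁺+(1−μ)(1−α⁺)). -/
open MeasureTheory Set Filter Topology
open scoped ENNReal NNReal

noncomputable section

section Aux

open MeasureTheory Set

variable {S : Type} [MeasurableSpace S]

/-! ### Elementary facts about `posterior` -/

lemma post_denom_pos {μ a : ℝ} (hμ : μ ∈ Ioo (0:ℝ) 1) (ha : a ∈ Icc (0:ℝ) 1) :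
    0 < μ * a + (1 - μ) * (1 - a) := by
  obtain ⟨h0, h1⟩ := hμ; obtain ⟨ha0, ha1⟩ := ha
  rcases le_or_gt a (1/2) with h | h
  · nlinarith
  · nlinarith

lemma post_nonneg {μ a : ℝ} (hμ : μ ∈ Ioo (0:ℝ) 1) (ha : a ∈ Icc (0:ℝ) 1) :
    0 ≤ posterior μ a := by
  have := post_denom_pos hμ ha
  exact div_nonneg (by nlinarith [hμ.1, ha.1]) this.le

lemma post_le_one {μ a : ℝ} (hμ : μ ∈ Ioo (0:ℝ) 1) (ha : a ∈ Icc (0:ℝ) 1) :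
    posterior μ a ≤ 1 := by
  have hD := post_denom_pos hμ ha
  rw [posterior, div_le_one hD]
  nlinarith [hμ.2, ha.2, hμ.1, ha.1]

lemma post_mono {μ a b : ℝ} (hμ : μ ∈ Ioo (0:ℝ) 1) (ha : a ∈ Icc (0:ℝ) 1)
    (hb : b ∈ Icc (0:ℝ) 1) (hab : a ≤ b) : posterior μ a ≤ posterior μ b := by
  have hDa := post_denom_pos hμ ha
  have hDb := post_denom_pos hμ hb
  rw [posterior, posterior, div_le_div_iff₀ hDa hDb]
  nlinarith [mul_le_mul_of_nonneg_left hab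
    (mul_nonneg hμ.1.le (by linarith [hμ.2] : (0:ℝ) ≤ 1 - μ))]

lemma post_lt_half {μ a : ℝ} (hμ : μ ∈ Ioo (0:ℝ) 1) (ha : a ∈ Icc (0:ℝ) 1)
    (h : a < 1 - μ) : posterior μ a < 1/2 := by
  have hD := post_denom_pos hμ ha
  rw [posterior, div_lt_iff₀ hD]
  nlinarith [hμ.1]

lemma post_gt_half {μ a : ℝ} (hμ : μ ∈ Ioo (0:ℝ) 1) (ha : a ∈ Icc (0:ℝ) 1)
    (h : 1 - μ < a) : 1/2 < posterior μ a := by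
  have hD := post_denom_pos hμ ha
  rw [posterior, lt_div_iff₀ hD]
  nlinarith [hμ.1]

lemma half_le_post {μ a : ℝ} (hμ : μ ∈ Ioo (0:ℝ) 1) (ha : a ∈ Icc (0:ℝ) 1)
    (h : 1 - μ ≤ a) : 1/2 ≤ posterior μ a := by
  have hD := post_denom_pos hμ ha
  rw [posterior, le_div_iff₀ hD]
  nlinarith [hμ.1]

lemma post_le_half {μ a : ℝ} (hμ : μ ∈ Ioo (0:ℝ) 1) (ha : a ∈ Icc (0:ℝ) 1)
    (h : a ≤ 1 - μ) : posterior μ a ≤ 1/2 := by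
  have hD := post_denom_pos hμ ha
  rw [posterior, div_le_iff₀ hD]
  nlinarith [hμ.1]

lemma post_eq_zero_iff {μ a : ℝ} (hμ : μ ∈ Ioo (0:ℝ) 1) (ha : a ∈ Icc (0:ℝ) 1) :
    posterior μ a = 0 ↔ a = 0 := by
  have hD := post_denom_pos hμ ha
  rw [posterior, div_eq_zero_iff]
  constructor
  · rintro (h | h)
    · rcases mul_eq_zero.mp h with h | h
      · exact absurd h hμ.1.ne'
      · exact h
    · exact absurd h hD.ne'
  · intro h; left; rw [h, mul_zero]

lemma post_eq_one_iff {μ a : ℝ} (hμ : μ ∈ Ioo (0:ℝ) 1) (ha : a ∈ Icc (0:ℝ) 1) :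
    posterior μ a = 1 ↔ a = 1 := by
  have hD := post_denom_pos hμ ha
  rw [posterior, div_eq_one_iff_eq hD.ne']
  constructor
  · intro h
    have h1 : (1 - μ) * (1 - a) = 0 := by linarith
    rcases mul_eq_zero.mp h1 with h2 | h2
    · nlinarith [hμ.2]
    · linarith
  · intro h; rw [h]; ring

lemma measurable_posterior (μ : ℝ) : Measurable (posterior μ) := by
  unfold posterior
  exact (measurable_const.mul measurable_id).div
    ((measurable_const.mul measurable_id).add
      (measurable_const.mul (measurable_const.sub measurable_id)))

/-! ### Facts about the private belief -/

namespace SignalStructure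

variable (𝒮 : SignalStructure S)

lemma p_mem (s : S) : 𝒮.p s ∈ Icc (0:ℝ) 1 := by
  have ha : (0:ℝ) ≤ (𝒮.f0 s).toReal := ENNReal.toReal_nonneg
  have hb : (0:ℝ) ≤ (𝒮.f1 s).toReal := ENNReal.toReal_nonneg
  constructor
  · exact div_nonneg ha (by linarith)
  · rcases eq_or_lt_of_le (by linarith : (0:ℝ) ≤ (𝒮.f0 s).toReal + (𝒮.f1 s).toReal) with h | h
    · rw [p, ← h, div_zero]; norm_num
    · rw [p, div_le_one h]; linarith

lemma measurable_p : Measurable 𝒮.p := by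
  have h0 : Measurable 𝒮.f0 := Measure.measurable_rnDeriv _ _
  have h1 : Measurable 𝒮.f1 := Measure.measurable_rnDeriv _ _
  exact (h0.ennreal_toReal).div ((h0.ennreal_toReal).add (h1.ennreal_toReal))

lemma isProbFmix {μ : ℝ} (hμ : μ ∈ Ioo (0:ℝ) 1) : IsProbabilityMeasure (𝒮.Fmix μ) := by
  haveI := 𝒮.prob0; haveI := 𝒮.prob1
  constructor
  rw [Fmix, Measure.add_apply, Measure.smul_apply, Measure.smul_apply, measure_univ,
    measure_univ, smul_eq_mul, smul_eq_mul, mul_one, mul_one,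
    ← ENNReal.ofReal_add hμ.1.le (by linarith [hμ.2])]
  norm_num

lemma Fmix_apply (μ : ℝ) (A : Set S) :
    𝒮.Fmix μ A = ENNReal.ofReal μ * 𝒮.F0 A + ENNReal.ofReal (1 - μ) * 𝒮.F1 A := by
  rw [Fmix, Measure.add_apply, Measure.smul_apply, Measure.smul_apply, smul_eq_mul, smul_eq_mul]

lemma F0_le_Fmix {μ : ℝ} (hμ : μ ∈ Ioo (0:ℝ) 1) (A : Set S) :
    ENNReal.ofReal μ * 𝒮.F0 A ≤ 𝒮.Fmix μ A := by
  rw [Fmix_apply]; exact le_add_of_nonneg_right bot_le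

lemma Fmix_null {μ : ℝ} {A : Set S} (h0 : 𝒮.F0 A = 0) (h1 : 𝒮.F1 A = 0) :
    𝒮.Fmix μ A = 0 := by
  rw [Fmix_apply, h0, h1, mul_zero, mul_zero, add_zero]

lemma F0_ac_ref : 𝒮.F0 ≪ 𝒮.ref := by
  intro A hA
  rw [ref, Measure.smul_apply, smul_eq_mul, mul_eq_zero] at hA
  rcases hA with h | h
  · exact absurd h (by norm_num)
  · rw [Measure.add_apply, add_eq_zero] at h
    exact h.1

lemma F1_ac_ref : 𝒮.F1 ≪ 𝒮.ref := by
  intro A hA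
  rw [ref, Measure.smul_apply, smul_eq_mul, mul_eq_zero] at hA
  rcases hA with h | h
  · exact absurd h (by norm_num)
  · rw [Measure.add_apply, add_eq_zero] at h
    exact h.2

lemma isFiniteRef : IsFiniteMeasure 𝒮.ref := by
  haveI := 𝒮.prob0; haveI := 𝒮.prob1
  constructor
  rw [ref, Measure.smul_apply, smul_eq_mul, Measure.add_apply, measure_univ, measure_univ,
    one_add_one_eq_two, ENNReal.inv_mul_cancel (by norm_num) (by norm_num)]
  exact ENNReal.one_lt_top

lemma p_eq_zero_null : 𝒮.F0 {s | 𝒮.p s = 0} = 0 ∧ 𝒮.F1 {s | 𝒮.p s = 0} = 0 := by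
  haveI := 𝒮.prob0; haveI := 𝒮.prob1; haveI := 𝒮.isFiniteRef
  have hsub : {s | 𝒮.p s = 0} ⊆ {s | 𝒮.f0 s = 0} ∪ {s | 𝒮.f0 s = ∞} := by
    intro s hs
    by_contra hc
    simp only [mem_union, mem_setOf_eq, not_or] at hc
    have h1 : (0:ℝ) < (𝒮.f0 s).toReal := ENNReal.toReal_pos hc.1 hc.2
    have h2 : (0:ℝ) ≤ (𝒮.f1 s).toReal := ENNReal.toReal_nonneg
    have : 0 < 𝒮.p s := div_pos h1 (by linarith)
    exact this.ne' hs
  have hinf : 𝒮.ref {s | 𝒮.f0 s = ∞} = 0 := by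
    have h := Measure.rnDeriv_lt_top 𝒮.F0 𝒮.ref
    rw [ae_iff] at h
    refine measure_mono_null ?_ h
    intro s hs
    simp only [mem_setOf_eq, not_lt]
    exact top_le_iff.mpr hs
  have hzero : 𝒮.F0 {s | 𝒮.f0 s = 0} = 0 := by
    have h := Measure.rnDeriv_pos 𝒮.F0_ac_ref
    rw [ae_iff] at h
    refine measure_mono_null ?_ h
    intro s hs
    simp only [mem_setOf_eq, not_lt]
    exact hs.le
  constructor
  · exact measure_mono_null hsub (measure_union_null hzero (𝒮.F0_ac_ref hinf))
  · exact measure_mono_null hsub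
      (measure_union_null (𝒮.ac10 hzero) (𝒮.F1_ac_ref hinf))

lemma p_eq_one_null : 𝒮.F0 {s | 𝒮.p s = 1} = 0 ∧ 𝒮.F1 {s | 𝒮.p s = 1} = 0 := by
  haveI := 𝒮.prob0; haveI := 𝒮.prob1; haveI := 𝒮.isFiniteRef
  have hsub : {s | 𝒮.p s = 1} ⊆ {s | 𝒮.f1 s = 0} ∪ {s | 𝒮.f1 s = ∞} := by
    intro s hs
    by_contra hc
    simp only [mem_union, mem_setOf_eq, not_or] at hc
    have h1 : (0:ℝ) < (𝒮.f1 s).toReal := ENNReal.toReal_pos hc.1 hc.2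
    have h2 : (0:ℝ) ≤ (𝒮.f0 s).toReal := ENNReal.toReal_nonneg
    have hlt : 𝒮.p s < 1 := by
      rw [p, div_lt_one (by linarith)]; linarith
    exact hlt.ne hs
  have hinf : 𝒮.ref {s | 𝒮.f1 s = ∞} = 0 := by
    have h := Measure.rnDeriv_lt_top 𝒮.F1 𝒮.ref
    rw [ae_iff] at h
    refine measure_mono_null ?_ h
    intro s hs
    simp only [mem_setOf_eq, not_lt]
    exact top_le_iff.mpr hs
  have hzero : 𝒮.F1 {s | 𝒮.f1 s = 0} = 0 := by
    have h := Measure.rnDeriv_pos 𝒮.F1_ac_ref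
    rw [ae_iff] at h
    refine measure_mono_null ?_ h
    intro s hs
    simp only [mem_setOf_eq, not_lt]
    exact hs.le
  constructor
  · exact measure_mono_null hsub
      (measure_union_null (𝒮.ac01 hzero) (𝒮.F0_ac_ref hinf))
  · exact measure_mono_null hsub (measure_union_null hzero (𝒮.F1_ac_ref hinf))

lemma q_eq_zero_null {μ : ℝ} (hμ : μ ∈ Ioo (0:ℝ) 1) :
    𝒮.Fmix μ {s | posterior μ (𝒮.p s) = 0} = 0 := by
  have hsub : {s | posterior μ (𝒮.p s) = 0} ⊆ {s | 𝒮.p s = 0} := by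
    intro s hs
    exact (post_eq_zero_iff hμ (𝒮.p_mem s)).mp hs
  exact measure_mono_null hsub (𝒮.Fmix_null (𝒮.p_eq_zero_null).1 (𝒮.p_eq_zero_null).2)

lemma q_eq_one_null {μ : ℝ} (hμ : μ ∈ Ioo (0:ℝ) 1) :
    𝒮.Fmix μ {s | posterior μ (𝒮.p s) = 1} = 0 := by
  have hsub : {s | posterior μ (𝒮.p s) = 1} ⊆ {s | 𝒮.p s = 1} := by
    intro s hs
    exact (post_eq_one_iff hμ (𝒮.p_mem s)).mp hs
  exact measure_mono_null hsub (𝒮.Fmix_null (𝒮.p_eq_one_null).1 (𝒮.p_eq_one_null).2)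

end SignalStructure

end Aux
section Aux2

open MeasureTheory Set

lemma measurable_of_countable_exceptions {f g : ℝ → ℝ} (hg : Measurable g) {C : Set ℝ}
    (hC : C.Countable) (hfg : ∀ x ∉ C, f x = g x) : Measurable f := by
  intro B hB
  have hset : f ⁻¹' B = (C ∩ f ⁻¹' B) ∪ (g ⁻¹' B \ C) := by
    ext x
    by_cases hx : x ∈ C
    · simp [hx]
    · simp [hx, hfg x hx]
  rw [hset]
  exact ((hC.mono inter_subset_left).measurableSet).union ((hg hB).diff hC.measurableSet)

lemma meas_mono_of_ae_imp {α : Type*} [MeasurableSpace α] {ν : Measure α} {A B : Set α}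
    {P : α → Prop} (hP : ∀ᵐ s ∂ν, P s) (h : ∀ s, P s → s ∈ A → s ∈ B) : ν A ≤ ν B := by
  calc ν A ≤ ν (B ∪ {s | ¬ P s}) := by
        refine measure_mono fun s hs => ?_
        by_cases hp : P s
        · exact Or.inl (h s hp hs)
        · exact Or.inr hp
    _ ≤ ν B + ν {s | ¬ P s} := measure_union_le _ _
    _ = ν B := by rw [ae_iff.mp hP, add_zero]

namespace SignalStructure

variable {S : Type} [MeasurableSpace S] (𝒮 : SignalStructure S)

lemma toReal_meas_le_one {α : Type*} [MeasurableSpace α] (ν : Measure α)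
    [IsProbabilityMeasure ν] (A : Set α) : (ν A).toReal ≤ 1 := by
  have h : ν A ≤ 1 := prob_le_one
  have := ENNReal.toReal_mono ENNReal.one_ne_top h
  simpa using this

lemma actProb_nonneg (μ : ℝ) (σ : CStrategy S) (τ0 τ1 : ℝ) (a : CAction) :
    0 ≤ 𝒮.actProb μ σ τ0 τ1 a := ENNReal.toReal_nonneg

lemma actProb_le_one {μ : ℝ} (hμ : μ ∈ Ioo (0:ℝ) 1) (σ : CStrategy S) (τ0 τ1 : ℝ)
    (a : CAction) : 𝒮.actProb μ σ τ0 τ1 a ≤ 1 := by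
  haveI := 𝒮.isProbFmix hμ
  exact toReal_meas_le_one _ _

lemma countable_atoms {μ : ℝ} (hμ : μ ∈ Ioo (0:ℝ) 1) :
    {x : ℝ | 𝒮.Fmix μ {s | posterior μ (𝒮.p s) = x} ≠ 0}.Countable := by
  haveI := 𝒮.isProbFmix hμ
  have h := Measure.countable_meas_level_set_pos
    (μ := 𝒮.Fmix μ) (g := fun s => posterior μ (𝒮.p s))
    ((measurable_posterior μ).comp 𝒮.measurable_p)
  refine h.mono fun x hx => ?_
  simpa [pos_iff_ne_zero] using hx

/-- Measurable representative for the slice `τ0 ↦ actProb μ σ τ0 τ1 buy1` on `[0,1]`. -/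
lemma slice_buy1 {μ : ℝ} (hμ : μ ∈ Ioo (0:ℝ) 1) (σ : CStrategy S)
    (hmeas : ∀ τ0 τ1, Measurable (σ τ0 τ1))
    (hBR : ∀ τ0 ∈ Icc (0:ℝ) 1, ∀ τ1 ∈ Icc (0:ℝ) 1,
      ∀ᵐ s ∂(𝒮.Fmix μ), ∀ a : CAction,
        cUtil (posterior μ (𝒮.p s)) τ0 τ1 a ≤ cUtil (posterior μ (𝒮.p s)) τ0 τ1 (σ τ0 τ1 s))
    {τ1 : ℝ} (hτ1 : τ1 ∈ Icc (0:ℝ) 1)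
    (hatom : 𝒮.Fmix μ {s | posterior μ (𝒮.p s) = 1 - τ1} = 0) :
    ∃ r : ℝ → ℝ, Measurable r ∧ (∀ x, r x ∈ Icc (0:ℝ) 1) ∧
      ∀ τ0 ∈ Icc (0:ℝ) 1, 𝒮.actProb μ σ τ0 τ1 CAction.buy1 = r τ0 := by
  classical
  haveI := 𝒮.isProbFmix hμ
  set q : S → ℝ := fun s => posterior μ (𝒮.p s) with hq
  set θ : ℝ → ℝ := fun τ0 => min ((1 + τ0 - τ1) / 2) (1 - τ1) with hθ
  set m : ℝ → ℝ := fun τ0 => (𝒮.Fmix μ {s | q s < θ τ0}).toReal with hm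
  have hmmono : Monotone m := by
    intro a b hab
    refine ENNReal.toReal_mono (measure_ne_top _ _) (measure_mono fun s hs => ?_)
    have hs' : q s < θ a := hs
    show q s < θ b
    refine lt_of_lt_of_le hs' ?_
    have : (1 + a - τ1) / 2 ≤ (1 + b - τ1) / 2 := by linarith
    exact min_le_min this le_rfl
  set C : Set ℝ := (fun τ0 : ℝ => (1 + τ0 - τ1) / 2) ⁻¹'
    {x : ℝ | 𝒮.Fmix μ {s | q s = x} ≠ 0} with hC
  have hCcount : C.Countable := by
    refine (𝒮.countable_atoms hμ).preimage ?_
    intro a b hab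
    dsimp at hab; linarith
  refine ⟨C.piecewise (fun τ0 => 𝒮.actProb μ σ τ0 τ1 CAction.buy1) m, ?_, ?_, ?_⟩
  · refine measurable_of_countable_exceptions (hmmono.measurable) hCcount fun x hx => ?_
    exact Set.piecewise_eq_of_notMem _ _ _ hx
  · intro x
    by_cases hx : x ∈ C
    · rw [Set.piecewise_eq_of_mem _ _ _ hx]
      exact ⟨𝒮.actProb_nonneg _ _ _ _ _, 𝒮.actProb_le_one hμ _ _ _ _⟩
    · rw [Set.piecewise_eq_of_notMem _ _ _ hx]
      constructor
      · exact ENNReal.toReal_nonneg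
      · exact toReal_meas_le_one _ _
  · intro τ0 hτ0
    by_cases hx : τ0 ∈ C
    · rw [Set.piecewise_eq_of_mem _ _ _ hx]
    · rw [Set.piecewise_eq_of_notMem _ _ _ hx]
      -- the tie level has measure zero
      have htie : 𝒮.Fmix μ {s | q s = θ τ0} = 0 := by
        rcases le_total ((1 + τ0 - τ1) / 2) (1 - τ1) with hle | hle
        · have : θ τ0 = (1 + τ0 - τ1) / 2 := min_eq_left hle
          rw [this]
          by_contra hne
          exact hx hne
        · have : θ τ0 = 1 - τ1 := min_eq_right hle
          rw [this]
          exact hatom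
      have h1 : 𝒮.Fmix μ {s | q s < θ τ0} ≤ 𝒮.Fmix μ {s | σ τ0 τ1 s = CAction.buy1} := by
        refine meas_mono_of_ae_imp (hBR τ0 hτ0 τ1 hτ1) fun s hbr hs => ?_
        simp only [mem_setOf_eq] at hs ⊢
        have hs1 : q s < (1 + τ0 - τ1) / 2 := lt_of_lt_of_le hs (min_le_left _ _)
        have hs2 : q s < 1 - τ1 := lt_of_lt_of_le hs (min_le_right _ _)
        rcases hσ : σ τ0 τ1 s with _ | _ | _
        · have hb := hbr CAction.buy1
          rw [hσ] at hb
          simp only [cUtil] at hb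
          linarith
        · rfl
        · have hb := hbr CAction.buy1
          rw [hσ] at hb
          simp only [cUtil] at hb
          linarith
      have h2 : 𝒮.Fmix μ {s | σ τ0 τ1 s = CAction.buy1} ≤ 𝒮.Fmix μ {s | q s ≤ θ τ0} := by
        refine meas_mono_of_ae_imp (hBR τ0 hτ0 τ1 hτ1) fun s hbr hs => ?_
        simp only [mem_setOf_eq] at hs ⊢
        have hb0 := hbr CAction.buy0
        have hbe := hbr CAction.exit
        rw [hs] at hb0 hbe
        simp only [cUtil] at hb0 hbe
        exact le_min (by linarith) (by linarith)
      have h3 : 𝒮.Fmix μ {s | q s ≤ θ τ0} ≤ 𝒮.Fmix μ {s | q s < θ τ0} := by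
        calc 𝒮.Fmix μ {s | q s ≤ θ τ0}
            ≤ 𝒮.Fmix μ ({s | q s < θ τ0} ∪ {s | q s = θ τ0}) := by
              refine measure_mono fun s hs => ?_
              have hs' : q s ≤ θ τ0 := hs
              rcases lt_or_eq_of_le hs' with h | h
              · exact Or.inl h
              · exact Or.inr h
          _ ≤ 𝒮.Fmix μ {s | q s < θ τ0} + 𝒮.Fmix μ {s | q s = θ τ0} := measure_union_le _ _
          _ = 𝒮.Fmix μ {s | q s < θ τ0} := by rw [htie, add_zero]
      have heq : 𝒮.Fmix μ {s | σ τ0 τ1 s = CAction.buy1} = 𝒮.Fmix μ {s | q s < θ τ0} :=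
        le_antisymm (h2.trans h3) h1
      rw [actProb, heq]

/-- Measurable representative for the slice `τ1 ↦ actProb μ σ τ0 τ1 buy0` on `[0,1]`. -/
lemma slice_buy0 {μ : ℝ} (hμ : μ ∈ Ioo (0:ℝ) 1) (σ : CStrategy S)
    (hmeas : ∀ τ0 τ1, Measurable (σ τ0 τ1))
    (hBR : ∀ τ0 ∈ Icc (0:ℝ) 1, ∀ τ1 ∈ Icc (0:ℝ) 1,
      ∀ᵐ s ∂(𝒮.Fmix μ), ∀ a : CAction,
        cUtil (posterior μ (𝒮.p s)) τ0 τ1 a ≤ cUtil (posterior μ (𝒮.p s)) τ0 τ1 (σ τ0 τ1 s))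
    {τ0 : ℝ} (hτ0 : τ0 ∈ Icc (0:ℝ) 1)
    (hatom : 𝒮.Fmix μ {s | posterior μ (𝒮.p s) = τ0} = 0) :
    ∃ r : ℝ → ℝ, Measurable r ∧ (∀ x, r x ∈ Icc (0:ℝ) 1) ∧
      ∀ τ1 ∈ Icc (0:ℝ) 1, 𝒮.actProb μ σ τ0 τ1 CAction.buy0 = r τ1 := by
  classical
  haveI := 𝒮.isProbFmix hμ
  set q : S → ℝ := fun s => posterior μ (𝒮.p s) with hq
  set θ : ℝ → ℝ := fun τ1 => max τ0 ((1 + τ0 - τ1) / 2) with hθ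
  set m : ℝ → ℝ := fun τ1 => (𝒮.Fmix μ {s | θ τ1 < q s}).toReal with hm
  have hmmono : Monotone m := by
    intro a b hab
    refine ENNReal.toReal_mono (measure_ne_top _ _) (measure_mono fun s hs => ?_)
    have hs' : θ a < q s := hs
    show θ b < q s
    refine lt_of_le_of_lt ?_ hs'
    have : (1 + τ0 - b) / 2 ≤ (1 + τ0 - a) / 2 := by linarith
    exact max_le_max le_rfl this
  set C : Set ℝ := (fun τ1 : ℝ => (1 + τ0 - τ1) / 2) ⁻¹'
    {x : ℝ | 𝒮.Fmix μ {s | q s = x} ≠ 0} with hC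
  have hCcount : C.Countable := by
    refine (𝒮.countable_atoms hμ).preimage ?_
    intro a b hab
    dsimp at hab; linarith
  refine ⟨C.piecewise (fun τ1 => 𝒮.actProb μ σ τ0 τ1 CAction.buy0) m, ?_, ?_, ?_⟩
  · refine measurable_of_countable_exceptions (hmmono.measurable) hCcount fun x hx => ?_
    exact Set.piecewise_eq_of_notMem _ _ _ hx
  · intro x
    by_cases hx : x ∈ C
    · rw [Set.piecewise_eq_of_mem _ _ _ hx]
      exact ⟨𝒮.actProb_nonneg _ _ _ _ _, 𝒮.actProb_le_one hμ _ _ _ _⟩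
    · rw [Set.piecewise_eq_of_notMem _ _ _ hx]
      constructor
      · exact ENNReal.toReal_nonneg
      · exact toReal_meas_le_one _ _
  · intro τ1 hτ1
    by_cases hx : τ1 ∈ C
    · rw [Set.piecewise_eq_of_mem _ _ _ hx]
    · rw [Set.piecewise_eq_of_notMem _ _ _ hx]
      have htie : 𝒮.Fmix μ {s | q s = θ τ1} = 0 := by
        rcases le_total ((1 + τ0 - τ1) / 2) τ0 with hle | hle
        · have : θ τ1 = τ0 := max_eq_left hle
          rw [this]
          exact hatom
        · have : θ τ1 = (1 + τ0 - τ1) / 2 := max_eq_right hle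
          rw [this]
          by_contra hne
          exact hx hne
      have h1 : 𝒮.Fmix μ {s | θ τ1 < q s} ≤ 𝒮.Fmix μ {s | σ τ0 τ1 s = CAction.buy0} := by
        refine meas_mono_of_ae_imp (hBR τ0 hτ0 τ1 hτ1) fun s hbr hs => ?_
        simp only [mem_setOf_eq] at hs ⊢
        have hs1 : τ0 < q s := lt_of_le_of_lt (le_max_left _ _) hs
        have hs2 : (1 + τ0 - τ1) / 2 < q s := lt_of_le_of_lt (le_max_right _ _) hs
        rcases hσ : σ τ0 τ1 s with _ | _ | _
        · rfl
        · have hb := hbr CAction.buy0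
          rw [hσ] at hb
          simp only [cUtil] at hb
          linarith
        · have hb := hbr CAction.buy0
          rw [hσ] at hb
          simp only [cUtil] at hb
          linarith
      have h2 : 𝒮.Fmix μ {s | σ τ0 τ1 s = CAction.buy0} ≤ 𝒮.Fmix μ {s | θ τ1 ≤ q s} := by
        refine meas_mono_of_ae_imp (hBR τ0 hτ0 τ1 hτ1) fun s hbr hs => ?_
        simp only [mem_setOf_eq] at hs ⊢
        have hb1 := hbr CAction.buy1
        have hbe := hbr CAction.exit
        rw [hs] at hb1 hbe
        simp only [cUtil] at hb1 hbe
        exact max_le (by linarith) (by linarith)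
      have h3 : 𝒮.Fmix μ {s | θ τ1 ≤ q s} ≤ 𝒮.Fmix μ {s | θ τ1 < q s} := by
        calc 𝒮.Fmix μ {s | θ τ1 ≤ q s}
            ≤ 𝒮.Fmix μ ({s | θ τ1 < q s} ∪ {s | q s = θ τ1}) := by
              refine measure_mono fun s hs => ?_
              have hs' : θ τ1 ≤ q s := hs
              rcases lt_or_eq_of_le hs' with h | h
              · exact Or.inl h
              · exact Or.inr h.symm
          _ ≤ 𝒮.Fmix μ {s | θ τ1 < q s} + 𝒮.Fmix μ {s | q s = θ τ1} := measure_union_le _ _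
          _ = 𝒮.Fmix μ {s | θ τ1 < q s} := by rw [htie, add_zero]
      have heq : 𝒮.Fmix μ {s | σ τ0 τ1 s = CAction.buy0} = 𝒮.Fmix μ {s | θ τ1 < q s} :=
        le_antisymm (h2.trans h3) h1
      rw [actProb, heq]

end SignalStructure

end Aux2
section Key

open MeasureTheory Set

namespace SignalStructure

variable {S : Type} [MeasurableSpace S] (𝒮 : SignalStructure S)

lemma ae_mem_Icc {φ : Measure ℝ} (hφ : IsPriceStrategy φ) :
    ∀ᵐ x ∂φ, x ∈ Icc (0:ℝ) 1 := by
  haveI := hφ.1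
  have h : φ (Icc (0:ℝ) 1)ᶜ = 0 := (prob_compl_eq_zero_iff measurableSet_Icc).mpr hφ.2
  rw [ae_iff]
  simpa [Set.compl_def] using h

lemma ae_fst_mem_Icc {φ0 φ1 : Measure ℝ} (hφ0 : IsPriceStrategy φ0)
    (hφ1 : IsPriceStrategy φ1) :
    ∀ᵐ τ : ℝ × ℝ ∂(φ0.prod φ1), τ.1 ∈ Icc (0:ℝ) 1 ∧ τ.2 ∈ Icc (0:ℝ) 1 := by
  haveI := hφ0.1; haveI := hφ1.1
  rw [ae_iff]
  have hsub : {τ : ℝ × ℝ | ¬ (τ.1 ∈ Icc (0:ℝ) 1 ∧ τ.2 ∈ Icc (0:ℝ) 1)} ⊆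
      ((Icc (0:ℝ) 1)ᶜ ×ˢ univ) ∪ (univ ×ˢ (Icc (0:ℝ) 1)ᶜ) := by
    intro τ hτ
    simp only [mem_setOf_eq, not_and_or] at hτ
    rcases hτ with h | h
    · exact Or.inl ⟨h, trivial⟩
    · exact Or.inr ⟨trivial, h⟩
  refine measure_mono_null hsub (measure_union_null ?_ ?_)
  · rw [Measure.prod_prod, (prob_compl_eq_zero_iff measurableSet_Icc).mpr hφ0.2, zero_mul]
  · rw [Measure.prod_prod, (prob_compl_eq_zero_iff measurableSet_Icc).mpr hφ1.2, mul_zero]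

lemma key1 {μ : ℝ} (hμ : μ ∈ Ioo (0:ℝ) 1)
    {φ0 φ1 : Measure ℝ} {σ : CStrategy S} (hSPE : 𝒮.IsSPE μ φ0 φ1 σ)
    (h1 : 𝒮.actProbMix μ φ0 φ1 σ CAction.buy1 = 0)
    {x0 : ℝ} (hG : 0 < 𝒮.G0 x0) (hx0 : x0 < 1 - μ) : False := by
  haveI := 𝒮.prob0
  haveI hPF := 𝒮.isProbFmix hμ
  haveI hprob0 : IsProbabilityMeasure φ0 := hSPE.strat0.1
  haveI hprob1 : IsProbabilityMeasure φ1 := hSPE.strat1.1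
  -- basic facts about x0
  have hx0pos : 0 < x0 := by
    by_contra h
    push_neg at h
    have hempty : {s | 𝒮.p s < x0} = ∅ := by
      refine eq_empty_iff_forall_notMem.mpr fun s hs => ?_
      have := (𝒮.p_mem s).1
      simp only [mem_setOf_eq] at hs
      linarith
    rw [G0, hempty, measure_empty] at hG
    simp at hG
  have hx0Icc : x0 ∈ Icc (0:ℝ) 1 := ⟨hx0pos.le, by linarith [hμ.1]⟩
  have hpβ : posterior μ x0 < 1/2 := post_lt_half hμ hx0Icc hx0
  have hpβ0 : 0 ≤ posterior μ x0 := post_nonneg hμ hx0Icc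
  obtain ⟨δ, hδdef⟩ : ∃ δ : ℝ, δ = 1/2 - posterior μ x0 := ⟨_, rfl⟩
  have hδ : 0 < δ := by rw [hδdef]; linarith
  have hδhalf : δ ≤ 1/2 := by rw [hδdef]; linarith
  -- choose a price τ1s in (0, δ] avoiding atoms of the posterior distribution
  have hT : {t : ℝ | 𝒮.Fmix μ {s | posterior μ (𝒮.p s) = 1 - t} ≠ 0}.Countable :=
    (𝒮.countable_atoms hμ).preimage (f := fun t : ℝ => 1 - t)
      (fun a b hab => by dsimp at hab; linarith)
  have hnot : ¬ (Ioc (0:ℝ) δ ⊆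
      {t : ℝ | 𝒮.Fmix μ {s | posterior μ (𝒮.p s) = 1 - t} ≠ 0}) := by
    intro hsub
    have hv : (volume : Measure ℝ) (Ioc 0 δ) = 0 :=
      le_antisymm ((measure_mono hsub).trans (hT.measure_zero _).le) (by simp)
    rw [Real.volume_Ioc, ENNReal.ofReal_eq_zero] at hv
    linarith
  obtain ⟨τ1s, hτmem, hτgood⟩ := Set.not_subset.mp hnot
  obtain ⟨hτpos, hτle⟩ := hτmem
  have hτIcc : τ1s ∈ Icc (0:ℝ) 1 := ⟨hτpos.le, by linarith⟩
  have hatom : 𝒮.Fmix μ {s | posterior μ (𝒮.p s) = 1 - τ1s} = 0 := not_ne_iff.mp hτgood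
  obtain ⟨r, hrmeas, hrmem, hreq⟩ :=
    𝒮.slice_buy1 hμ σ hSPE.meas hSPE.consumerBR hτIcc hatom
  -- the deterrence constant c
  have hF0pos : 𝒮.F0 {s | 𝒮.p s < x0} ≠ 0 := by
    intro h
    rw [G0, h] at hG
    simp at hG
  have hFmixpos : 𝒮.Fmix μ {s | 𝒮.p s < x0} ≠ 0 := by
    intro h
    have hle := 𝒮.F0_le_Fmix hμ {s | 𝒮.p s < x0}
    rw [h, nonpos_iff_eq_zero] at hle
    rcases mul_eq_zero.mp hle with h' | h'
    · rw [ENNReal.ofReal_eq_zero] at h'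
      linarith [hμ.1]
    · exact hF0pos h'
  obtain ⟨c, hcdef⟩ : ∃ c : ℝ, c = (𝒮.Fmix μ {s | 𝒮.p s < x0}).toReal := ⟨_, rfl⟩
  have hcpos : 0 < c := by
    rw [hcdef]
    exact ENNReal.toReal_pos hFmixpos (measure_ne_top _ _)
  -- uniform lower bound on firm 1's sale probability at price τ1s
  have hlb : ∀ τ0 ∈ Icc (0:ℝ) 1, c ≤ 𝒮.actProb μ σ τ0 τ1s CAction.buy1 := by
    intro τ0 hτ0
    rw [hcdef, actProb]
    refine ENNReal.toReal_mono (measure_ne_top _ _) ?_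
    refine meas_mono_of_ae_imp (hSPE.consumerBR τ0 hτ0 τ1s hτIcc) fun s hbr hs => ?_
    simp only [mem_setOf_eq] at hs ⊢
    have hqs : posterior μ (𝒮.p s) ≤ posterior μ x0 :=
      post_mono hμ (𝒮.p_mem s) hx0Icc hs.le
    rcases hσ : σ τ0 τ1s s with _ | _ | _
    · exfalso
      have hb := hbr CAction.buy1
      rw [hσ] at hb
      simp only [cUtil] at hb
      linarith [hτ0.1]
    · rfl
    · exfalso
      have hb := hbr CAction.buy1
      rw [hσ] at hb
      simp only [cUtil] at hb
      linarith
  -- deviation to the pure price τ1s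
  have hdstrat : IsPriceStrategy (Measure.dirac τ1s) := by
    refine ⟨by infer_instance, ?_⟩
    rw [Measure.dirac_apply' _ measurableSet_Icc]
    simp [Set.indicator, hτIcc]
  have hrint : Integrable (fun x => r x * τ1s) φ0 := by
    refine Integrable.mono' (integrable_const (1:ℝ))
      ((hrmeas.mul_const τ1s).aestronglyMeasurable) (ae_of_all _ fun x => ?_)
    rw [Real.norm_eq_abs, abs_mul, abs_of_nonneg (hrmem x).1, abs_of_nonneg hτpos.le]
    calc r x * τ1s ≤ 1 * 1 :=
      mul_le_mul (hrmem x).2 (by linarith) hτpos.le zero_le_one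
    _ = 1 := mul_one 1
  have hdev : c * τ1s ≤ 𝒮.Pi1 μ φ0 (Measure.dirac τ1s) σ := by
    rw [Pi1, Measure.prod_dirac, (measurableEmbedding_prod_mk_right τ1s).integral_map]
    have heqae : (fun τ0 => 𝒮.actProb μ σ τ0 τ1s CAction.buy1 * τ1s)
        =ᵐ[φ0] fun τ0 => r τ0 * τ1s := by
      filter_upwards [ae_mem_Icc hSPE.strat0] with x hx
      rw [hreq x hx]
    calc c * τ1s = ∫ _, c * τ1s ∂φ0 := by
          rw [integral_const]; simp
      _ ≤ ∫ τ0, r τ0 * τ1s ∂φ0 := by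
          refine integral_mono_ae (integrable_const _) hrint ?_
          filter_upwards [ae_mem_Icc hSPE.strat0] with x hx
          have := hlb x hx
          rw [hreq x hx] at this
          exact mul_le_mul_of_nonneg_right this hτpos.le
      _ = ∫ τ0, 𝒮.actProb μ σ τ0 τ1s CAction.buy1 * τ1s ∂φ0 :=
          (integral_congr_ae heqae).symm
  have hPi1 : c * τ1s ≤ 𝒮.Pi1 μ φ0 φ1 σ := hdev.trans (hSPE.firm1opt _ hdstrat)
  have hPi1pos : 0 < 𝒮.Pi1 μ φ0 φ1 σ := lt_of_lt_of_le (mul_pos hcpos hτpos) hPi1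
  -- integrability of the payoff integrand
  have hGint : Integrable
      (fun τ : ℝ × ℝ => 𝒮.actProb μ σ τ.1 τ.2 CAction.buy1 * τ.2) (φ0.prod φ1) := by
    by_contra hni
    rw [Pi1, integral_undef hni] at hPi1pos
    exact lt_irrefl 0 hPi1pos
  -- the slice at τ1 = 0
  have hatom0 : 𝒮.Fmix μ {s | posterior μ (𝒮.p s) = 1 - 0} = 0 := by
    simpa using 𝒮.q_eq_one_null hμ
  obtain ⟨r0, hr0meas, hr0mem, hr0eq⟩ :=
    𝒮.slice_buy1 hμ σ hSPE.meas hSPE.consumerBR (τ1 := 0) ⟨le_refl 0, zero_le_one⟩ hatom0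
  -- the sale probability function is a.e. strongly measurable
  have hFaesm : AEStronglyMeasurable
      (fun τ : ℝ × ℝ => 𝒮.actProb μ σ τ.1 τ.2 CAction.buy1) (φ0.prod φ1) := by
    have hset : MeasurableSet {τ : ℝ × ℝ | τ.2 = 0} :=
      measurable_snd (measurableSet_singleton 0)
    have e1 : AEStronglyMeasurable
        (Set.indicator {τ : ℝ × ℝ | τ.2 = 0} (fun τ => r0 τ.1)) (φ0.prod φ1) :=
      ((hr0meas.comp measurable_fst).aestronglyMeasurable).indicator hset
    have e2 : AEStronglyMeasurable
        (Set.indicator {τ : ℝ × ℝ | τ.2 = 0}ᶜ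
          (fun τ => 𝒮.actProb μ σ τ.1 τ.2 CAction.buy1 * τ.2 * (τ.2)⁻¹)) (φ0.prod φ1) :=
      (hGint.aestronglyMeasurable.mul
        (measurable_snd.inv).aestronglyMeasurable).indicator hset.compl
    refine (e1.add e2).congr ?_
    filter_upwards [ae_fst_mem_Icc hSPE.strat0 hSPE.strat1] with τ hτ
    simp only [Pi.add_apply]
    by_cases h2 : τ.2 = 0
    · have hmem : τ ∈ {τ : ℝ × ℝ | τ.2 = 0} := h2
      rw [Set.indicator_of_mem hmem, Set.indicator_of_notMem (by simpa using h2),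
        add_zero, ← hr0eq τ.1 hτ.1, h2]
    · have hmem : τ ∈ {τ : ℝ × ℝ | τ.2 = 0}ᶜ := by simpa using h2
      rw [Set.indicator_of_notMem (by simpa using h2), Set.indicator_of_mem hmem,
        zero_add, mul_assoc, mul_inv_cancel₀ h2, mul_one]
  have hFint : Integrable
      (fun τ : ℝ × ℝ => 𝒮.actProb μ σ τ.1 τ.2 CAction.buy1) (φ0.prod φ1) := by
    refine Integrable.mono' (integrable_const (1:ℝ)) hFaesm (ae_of_all _ fun τ => ?_)
    rw [Real.norm_eq_abs, abs_of_nonneg (𝒮.actProb_nonneg _ _ _ _ _)]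
    exact 𝒮.actProb_le_one hμ _ _ _ _
  -- conclude: the payoff must be zero, contradiction
  rw [actProbMix] at h1
  have hF0ae : (fun τ : ℝ × ℝ => 𝒮.actProb μ σ τ.1 τ.2 CAction.buy1)
      =ᵐ[φ0.prod φ1] 0 :=
    (integral_eq_zero_iff_of_nonneg (fun τ => 𝒮.actProb_nonneg _ _ _ _ _) hFint).mp h1
  have hGae : (fun τ : ℝ × ℝ => 𝒮.actProb μ σ τ.1 τ.2 CAction.buy1 * τ.2)
      =ᵐ[φ0.prod φ1] 0 := by
    filter_upwards [hF0ae] with τ hτ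
    simp only [Pi.zero_apply] at hτ ⊢
    rw [hτ, zero_mul]
  have : 𝒮.Pi1 μ φ0 φ1 σ = 0 := by
    rw [Pi1, integral_congr_ae hGae]
    simp
  rw [this] at hPi1pos
  exact lt_irrefl 0 hPi1pos

end SignalStructure

end Key
section Key0

open MeasureTheory Set

namespace SignalStructure

variable {S : Type} [MeasurableSpace S] (𝒮 : SignalStructure S)

lemma key0 {μ : ℝ} (hμ : μ ∈ Ioo (0:ℝ) 1)
    {φ0 φ1 : Measure ℝ} {σ : CStrategy S} (hSPE : 𝒮.IsSPE μ φ0 φ1 σ)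
    (h0 : 𝒮.actProbMix μ φ0 φ1 σ CAction.buy0 = 0)
    {x0 : ℝ} (hG : 𝒮.G0 x0 < 1) (hx0 : 1 - μ < x0) (hx0le1 : x0 ≤ 1) : False := by
  haveI := 𝒮.prob0
  haveI hPF := 𝒮.isProbFmix hμ
  haveI hprob0 : IsProbabilityMeasure φ0 := hSPE.strat0.1
  haveI hprob1 : IsProbabilityMeasure φ1 := hSPE.strat1.1
  have hx0pos : 0 < x0 := by linarith [hμ.2]
  have hx0Icc : x0 ∈ Icc (0:ℝ) 1 := ⟨hx0pos.le, hx0le1⟩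
  have hpβ : 1/2 < posterior μ x0 := post_gt_half hμ hx0Icc hx0
  have hpβ1 : posterior μ x0 ≤ 1 := post_le_one hμ hx0Icc
  obtain ⟨δ, hδdef⟩ : ∃ δ : ℝ, δ = posterior μ x0 - 1/2 := ⟨_, rfl⟩
  have hδ : 0 < δ := by rw [hδdef]; linarith
  have hδhalf : δ ≤ 1/2 := by rw [hδdef]; linarith
  -- choose a price τ0s in (0, δ] avoiding atoms of the posterior distribution
  have hT : {t : ℝ | 𝒮.Fmix μ {s | posterior μ (𝒮.p s) = t} ≠ 0}.Countable :=
    𝒮.countable_atoms hμ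
  have hnot : ¬ (Ioc (0:ℝ) δ ⊆
      {t : ℝ | 𝒮.Fmix μ {s | posterior μ (𝒮.p s) = t} ≠ 0}) := by
    intro hsub
    have hv : (volume : Measure ℝ) (Ioc 0 δ) = 0 :=
      le_antisymm ((measure_mono hsub).trans (hT.measure_zero _).le) (by simp)
    rw [Real.volume_Ioc, ENNReal.ofReal_eq_zero] at hv
    linarith
  obtain ⟨τ0s, hτmem, hτgood⟩ := Set.not_subset.mp hnot
  obtain ⟨hτpos, hτle⟩ := hτmem
  have hτIcc : τ0s ∈ Icc (0:ℝ) 1 := ⟨hτpos.le, by linarith⟩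
  have hatom : 𝒮.Fmix μ {s | posterior μ (𝒮.p s) = τ0s} = 0 := not_ne_iff.mp hτgood
  obtain ⟨r, hrmeas, hrmem, hreq⟩ :=
    𝒮.slice_buy0 hμ σ hSPE.meas hSPE.consumerBR hτIcc hatom
  -- the deterrence constant c
  have hF0pos : 𝒮.F0 {s | 𝒮.p s < x0}ᶜ ≠ 0 := by
    intro h
    have hms : MeasurableSet {s | 𝒮.p s < x0} := 𝒮.measurable_p measurableSet_Iio
    have hsum := measure_add_measure_compl (μ := 𝒮.F0) hms
    rw [h, add_zero, measure_univ] at hsum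
    rw [G0, hsum] at hG
    simp at hG
  have hFmixpos : 𝒮.Fmix μ {s | 𝒮.p s < x0}ᶜ ≠ 0 := by
    intro h
    have hle := 𝒮.F0_le_Fmix hμ {s | 𝒮.p s < x0}ᶜ
    rw [h, nonpos_iff_eq_zero] at hle
    rcases mul_eq_zero.mp hle with h' | h'
    · rw [ENNReal.ofReal_eq_zero] at h'
      linarith [hμ.1]
    · exact hF0pos h'
  obtain ⟨c, hcdef⟩ : ∃ c : ℝ, c = (𝒮.Fmix μ {s | 𝒮.p s < x0}ᶜ).toReal := ⟨_, rfl⟩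
  have hcpos : 0 < c := by
    rw [hcdef]
    exact ENNReal.toReal_pos hFmixpos (measure_ne_top _ _)
  -- uniform lower bound on firm 0's sale probability at price τ0s
  have hlb : ∀ τ1 ∈ Icc (0:ℝ) 1, c ≤ 𝒮.actProb μ σ τ0s τ1 CAction.buy0 := by
    intro τ1 hτ1
    rw [hcdef, actProb]
    refine ENNReal.toReal_mono (measure_ne_top _ _) ?_
    refine meas_mono_of_ae_imp (hSPE.consumerBR τ0s hτIcc τ1 hτ1) fun s hbr hs => ?_
    simp only [mem_compl_iff, mem_setOf_eq, not_lt] at hs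
    simp only [mem_setOf_eq]
    have hqs : posterior μ x0 ≤ posterior μ (𝒮.p s) :=
      post_mono hμ hx0Icc (𝒮.p_mem s) hs
    rcases hσ : σ τ0s τ1 s with _ | _ | _
    · rfl
    · exfalso
      have hb := hbr CAction.buy0
      rw [hσ] at hb
      simp only [cUtil] at hb
      linarith [hτ1.1]
    · exfalso
      have hb := hbr CAction.buy0
      rw [hσ] at hb
      simp only [cUtil] at hb
      linarith
  -- deviation to the pure price τ0s
  have hdstrat : IsPriceStrategy (Measure.dirac τ0s) := by
    refine ⟨by infer_instance, ?_⟩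
    rw [Measure.dirac_apply' _ measurableSet_Icc]
    simp [Set.indicator, hτIcc]
  have hrint : Integrable (fun x => r x * τ0s) φ1 := by
    refine Integrable.mono' (integrable_const (1:ℝ))
      ((hrmeas.mul_const τ0s).aestronglyMeasurable) (ae_of_all _ fun x => ?_)
    rw [Real.norm_eq_abs, abs_mul, abs_of_nonneg (hrmem x).1, abs_of_nonneg hτpos.le]
    calc r x * τ0s ≤ 1 * 1 :=
      mul_le_mul (hrmem x).2 (by linarith) hτpos.le zero_le_one
    _ = 1 := mul_one 1
  have hdev : c * τ0s ≤ 𝒮.Pi0 μ (Measure.dirac τ0s) φ1 σ := by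
    rw [Pi0, Measure.dirac_prod, (measurableEmbedding_prodMk_left τ0s).integral_map]
    have heqae : (fun τ1 => 𝒮.actProb μ σ τ0s τ1 CAction.buy0 * τ0s)
        =ᵐ[φ1] fun τ1 => r τ1 * τ0s := by
      filter_upwards [ae_mem_Icc hSPE.strat1] with x hx
      rw [hreq x hx]
    calc c * τ0s = ∫ _, c * τ0s ∂φ1 := by
          rw [integral_const]; simp
      _ ≤ ∫ τ1, r τ1 * τ0s ∂φ1 := by
          refine integral_mono_ae (integrable_const _) hrint ?_
          filter_upwards [ae_mem_Icc hSPE.strat1] with x hx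
          have := hlb x hx
          rw [hreq x hx] at this
          exact mul_le_mul_of_nonneg_right this hτpos.le
      _ = ∫ τ1, 𝒮.actProb μ σ τ0s τ1 CAction.buy0 * τ0s ∂φ1 :=
          (integral_congr_ae heqae).symm
  have hPi0 : c * τ0s ≤ 𝒮.Pi0 μ φ0 φ1 σ := hdev.trans (hSPE.firm0opt _ hdstrat)
  have hPi0pos : 0 < 𝒮.Pi0 μ φ0 φ1 σ := lt_of_lt_of_le (mul_pos hcpos hτpos) hPi0
  have hGint : Integrable
      (fun τ : ℝ × ℝ => 𝒮.actProb μ σ τ.1 τ.2 CAction.buy0 * τ.1) (φ0.prod φ1) := by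
    by_contra hni
    rw [Pi0, integral_undef hni] at hPi0pos
    exact lt_irrefl 0 hPi0pos
  -- the slice at τ0 = 0
  have hatom0 : 𝒮.Fmix μ {s | posterior μ (𝒮.p s) = 0} = 0 := 𝒮.q_eq_zero_null hμ
  obtain ⟨r0, hr0meas, hr0mem, hr0eq⟩ :=
    𝒮.slice_buy0 hμ σ hSPE.meas hSPE.consumerBR (τ0 := 0) ⟨le_refl 0, zero_le_one⟩ hatom0
  have hFaesm : AEStronglyMeasurable
      (fun τ : ℝ × ℝ => 𝒮.actProb μ σ τ.1 τ.2 CAction.buy0) (φ0.prod φ1) := by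
    have hset : MeasurableSet {τ : ℝ × ℝ | τ.1 = 0} :=
      measurable_fst (measurableSet_singleton 0)
    have e1 : AEStronglyMeasurable
        (Set.indicator {τ : ℝ × ℝ | τ.1 = 0} (fun τ => r0 τ.2)) (φ0.prod φ1) :=
      ((hr0meas.comp measurable_snd).aestronglyMeasurable).indicator hset
    have e2 : AEStronglyMeasurable
        (Set.indicator {τ : ℝ × ℝ | τ.1 = 0}ᶜ
          (fun τ => 𝒮.actProb μ σ τ.1 τ.2 CAction.buy0 * τ.1 * (τ.1)⁻¹)) (φ0.prod φ1) :=
      (hGint.aestronglyMeasurable.mul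
        (measurable_fst.inv).aestronglyMeasurable).indicator hset.compl
    refine (e1.add e2).congr ?_
    filter_upwards [ae_fst_mem_Icc hSPE.strat0 hSPE.strat1] with τ hτ
    simp only [Pi.add_apply]
    by_cases h2 : τ.1 = 0
    · have hmem : τ ∈ {τ : ℝ × ℝ | τ.1 = 0} := h2
      rw [Set.indicator_of_mem hmem, Set.indicator_of_notMem (by simpa using h2),
        add_zero, ← hr0eq τ.2 hτ.2, h2]
    · have hmem : τ ∈ {τ : ℝ × ℝ | τ.1 = 0}ᶜ := by simpa using h2
      rw [Set.indicator_of_notMem (by simpa using h2), Set.indicator_of_mem hmem,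
        zero_add, mul_assoc, mul_inv_cancel₀ h2, mul_one]
  have hFint : Integrable
      (fun τ : ℝ × ℝ => 𝒮.actProb μ σ τ.1 τ.2 CAction.buy0) (φ0.prod φ1) := by
    refine Integrable.mono' (integrable_const (1:ℝ)) hFaesm (ae_of_all _ fun τ => ?_)
    rw [Real.norm_eq_abs, abs_of_nonneg (𝒮.actProb_nonneg _ _ _ _ _)]
    exact 𝒮.actProb_le_one hμ _ _ _ _
  rw [actProbMix] at h0
  have hF0ae : (fun τ : ℝ × ℝ => 𝒮.actProb μ σ τ.1 τ.2 CAction.buy0)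
      =ᵐ[φ0.prod φ1] 0 :=
    (integral_eq_zero_iff_of_nonneg (fun τ => 𝒮.actProb_nonneg _ _ _ _ _) hFint).mp h0
  have hGae : (fun τ : ℝ × ℝ => 𝒮.actProb μ σ τ.1 τ.2 CAction.buy0 * τ.1)
      =ᵐ[φ0.prod φ1] 0 := by
    filter_upwards [hF0ae] with τ hτ
    simp only [Pi.zero_apply] at hτ ⊢
    rw [hτ, zero_mul]
  have : 𝒮.Pi0 μ φ0 φ1 σ = 0 := by
    rw [Pi0, integral_congr_ae hGae]
    simp
  rw [this] at hPi0pos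
  exact lt_irrefl 0 hPi0pos

end SignalStructure

end Key0
section Final

open MeasureTheory Set

namespace SignalStructure

variable {S : Type} [MeasurableSpace S] (𝒮 : SignalStructure S)

lemma G0_eq_one_of_gt {x : ℝ} (hx : 1 < x) : 𝒮.G0 x = 1 := by
  haveI := 𝒮.prob0
  have huniv : {s | 𝒮.p s < x} = univ :=
    eq_univ_iff_forall.mpr fun s => lt_of_le_of_lt (𝒮.p_mem s).2 hx
  rw [G0, huniv, measure_univ, ENNReal.toReal_one]

lemma G0_eq_zero_of_nonpos {x : ℝ} (hx : x ≤ 0) : 𝒮.G0 x = 0 := by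
  have hempty : {s | 𝒮.p s < x} = ∅ := by
    refine eq_empty_iff_forall_notMem.mpr fun s hs => ?_
    have := (𝒮.p_mem s).1
    simp only [mem_setOf_eq] at hs
    linarith
  rw [G0, hempty, measure_empty, ENNReal.toReal_zero]

end SignalStructure

end Final
/-- In a deterrence equilibrium of Γ(μ): if Firm 0 controls the market
(the consumer never buys from Firm 1) then α⁻_μ ≥ 1/2; symmetrically, if Firm 1
controls the market then α⁺_μ ≤ 1/2.  Here α⁻_μ, α⁺_μ are the posteriors obtained
from the prior μ and the private beliefs α⁻, α⁺. -/
theorem stmt4 {S : Type} [MeasurableSpace S] (𝒮 : SignalStructure S)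
    (g0 g1 : ℝ → ℝ) (hA : 𝒮.Assumption1 g0 g1)
    (μ : ℝ) (hμ : μ ∈ Ioo (0:ℝ) 1)
    (φ0 φ1 : Measure ℝ) (σ : CStrategy S)
    (hD : 𝒮.IsDeterrence μ φ0 φ1 σ) :
    (𝒮.actProbMix μ φ0 φ1 σ CAction.buy1 = 0 → (1:ℝ)/2 ≤ posterior μ 𝒮.alphaLo) ∧
      (𝒮.actProbMix μ φ0 φ1 σ CAction.buy0 = 0 → posterior μ 𝒮.alphaHi ≤ (1:ℝ)/2) := by
  obtain ⟨hSPE, -⟩ := hD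
  constructor
  · -- Firm 0 controls the market
    intro h1
    have hnonempty : {x : ℝ | 0 < 𝒮.G0 x}.Nonempty :=
      ⟨2, by simp [𝒮.G0_eq_one_of_gt (by norm_num : (1:ℝ) < 2)]⟩
    have hbdd : BddBelow {x : ℝ | 0 < 𝒮.G0 x} := by
      refine ⟨0, fun x hx => ?_⟩
      by_contra hc
      push_neg at hc
      rw [mem_setOf_eq, 𝒮.G0_eq_zero_of_nonpos hc.le] at hx
      exact lt_irrefl 0 hx
    have hlow : ∀ x ∈ {x : ℝ | 0 < 𝒮.G0 x}, 1 - μ ≤ x := by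
      intro x hx
      by_contra hc
      push_neg at hc
      exact 𝒮.key1 hμ hSPE h1 hx hc
    have hα : 1 - μ ≤ 𝒮.alphaLo := le_csInf hnonempty hlow
    have hαle1 : 𝒮.alphaLo ≤ 1 := by
      by_contra hc
      push_neg at hc
      have hmem : (1 + 𝒮.alphaLo)/2 ∈ {x : ℝ | 0 < 𝒮.G0 x} := by
        rw [mem_setOf_eq, 𝒮.G0_eq_one_of_gt (by linarith)]
        norm_num
      have h2 : 𝒮.alphaLo ≤ (1 + 𝒮.alphaLo)/2 := csInf_le hbdd hmem
      linarith
    exact half_le_post hμ ⟨by linarith [hμ.2], hαle1⟩ hα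
  · -- Firm 1 controls the market
    intro h0
    have hnonempty : {x : ℝ | 𝒮.G0 x < 1}.Nonempty :=
      ⟨0, by simp [𝒮.G0_eq_zero_of_nonpos (le_refl (0:ℝ))]⟩
    have hbdd : BddAbove {x : ℝ | 𝒮.G0 x < 1} := by
      refine ⟨1, fun x hx => ?_⟩
      by_contra hc
      push_neg at hc
      rw [mem_setOf_eq, 𝒮.G0_eq_one_of_gt hc] at hx
      exact lt_irrefl 1 hx
    have hub : ∀ x ∈ {x : ℝ | 𝒮.G0 x < 1}, x ≤ 1 - μ := by
      intro x hx
      by_contra hc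
      push_neg at hc
      have hxle1 : x ≤ 1 := by
        by_contra hc2
        push_neg at hc2
        rw [mem_setOf_eq, 𝒮.G0_eq_one_of_gt hc2] at hx
        exact lt_irrefl 1 hx
      exact 𝒮.key0 hμ hSPE h0 hx hc hxle1
    have hα : 𝒮.alphaHi ≤ 1 - μ := csSup_le hnonempty hub
    have hα0 : 0 ≤ 𝒮.alphaHi := by
      refine le_csSup hbdd ?_
      rw [mem_setOf_eq, 𝒮.G0_eq_zero_of_nonpos (le_refl (0:ℝ))]
      norm_num
    exact post_le_half hμ ⟨hα0, by linarith [hμ.1]⟩ hα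
end
end
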